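/- arXiv:2603.23036 — 5 statements merged into one kernel-verified Lean document; each statement's English description precedes it below -/
import Mathlib

section
/- If Φ : M_d(ℂ) → M_d(ℂ) is a *-algebra isomorphism, then there exists a unitary matrix U such that Φ(X) = U X U* for all X (Skolem–Noether in the matrix algebra case). -/
open Matrix

noncomputable section

lemma sn_mul_vecMulVec {n : Type*} [Fintype n] (M : Matrix n n ℂ) (a b : n → ℂ) :
    M * vecMulVec a b = vecMulVec (M *ᵥ a) b := by
  ext i j
  simp [mul_apply, vecMulVec_apply, mulVec, dotProduct, Finset.sum_mul, mul_assoc]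

lemma sn_vecMulVec_mul {n : Type*} [Fintype n] (M : Matrix n n ℂ) (a b : n → ℂ) :
    vecMulVec a b * M = vecMulVec a (b ᵥ* M) := by
  ext i j
  simp [mul_apply, vecMulVec_apply, vecMul, dotProduct, Finset.mul_sum, mul_assoc]

lemma sn_vecMulVec_mul_vecMulVec {n : Type*} [Fintype n] (a b c e : n → ℂ) :
    vecMulVec a b * vecMulVec c e = (b ⬝ᵥ c) • vecMulVec a e := by
  ext i j
  simp [mul_apply, vecMulVec_apply, dotProduct, Finset.sum_mul, Finset.mul_sum]
  congr 1; ext k; ring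

lemma sn_star_vecMulVec {n : Type*} (a b : n → ℂ) :
    star (vecMulVec a b) = vecMulVec (star b) (star a) := by
  ext i j
  simp [vecMulVec_apply, conjTranspose_apply, mul_comm]

lemma sn_vecMulVec_mulVec {n : Type*} [Fintype n] (a b x : n → ℂ) :
    vecMulVec a b *ᵥ x = (b ⬝ᵥ x) • a := by
  ext i
  simp [vecMulVec_apply, mulVec, dotProduct, Finset.sum_mul, Finset.mul_sum]
  congr 1; ext k; ring

lemma sn_single_dot {n : Type*} [Fintype n] [DecidableEq n] (j a : n) :
    Pi.single j (1:ℂ) ⬝ᵥ Pi.single a 1 = if j = a then 1 else 0 := by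
  rw [dotProduct_single, mul_one, Pi.single_apply]
  simp [eq_comm]

lemma sn_sum_vecMulVec {n : Type*} [Fintype n] [DecidableEq n] :
    ∑ j : n, vecMulVec (Pi.single j (1:ℂ)) (Pi.single j 1) = 1 := by
  ext i k
  rw [Matrix.sum_apply]
  simp [vecMulVec_apply, Pi.single_apply, one_apply, ite_and, eq_comm]



/-- Skolem–Noether for matrix algebras: every *-algebra isomorphism of
`M_d(ℂ)` is conjugation by a unitary. -/
theorem stmt6 {d : ℕ}
    (Φ : Matrix (Fin d) (Fin d) ℂ →ₗ[ℂ] Matrix (Fin d) (Fin d) ℂ)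
    (hΦ1 : Φ 1 = 1) (hΦmul : ∀ X Y, Φ (X * Y) = Φ X * Φ Y)
    (hΦstar : ∀ X, Φ (star X) = star (Φ X))
    (hbij : Function.Bijective Φ) :
    ∃ U : Matrix (Fin d) (Fin d) ℂ,
      U * star U = 1 ∧ star U * U = 1 ∧ ∀ X, Φ X = U * X * star U := by
  rcases Nat.eq_zero_or_pos d with hd | hd
  · subst hd
    exact ⟨1, Subsingleton.elim _ _, Subsingleton.elim _ _,
      fun X => Subsingleton.elim _ _⟩
  have z : Fin d := ⟨0, hd⟩
  set E : Fin d → Fin d → Matrix (Fin d) (Fin d) ℂ :=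
    fun i j => Matrix.single i j (1:ℂ) with hE
  have hEvv : ∀ i j, E i j = vecMulVec (Pi.single i 1) (Pi.single j 1) := fun i j =>
    Matrix.single_eq_single_vecMulVec_single i j
  have hEstar : ∀ i j, star (E i j) = E j i := by
    intro i j
    ext a b
    simp [hE, conjTranspose_apply, Matrix.single, and_comm]
  have hEmulE : ∀ i j k l, E i j * E k l = if j = k then E i l else 0 := by
    intro i j k l
    rw [hEvv, hEvv, sn_vecMulVec_mul_vecMulVec]
    by_cases h : j = k
    · subst h; simp [hEvv, dotProduct, Pi.single_apply]
    · simp [dotProduct, Pi.single_apply, h, eq_comm]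
  set P : Matrix (Fin d) (Fin d) ℂ := Φ (E z z) with hP
  have hPP : P * P = P := by
    rw [hP, ← hΦmul, hEmulE]; simp
  have hPs : star P = P := by
    rw [hP, ← hΦstar, hEstar]
  have hPne : P ≠ 0 := by
    intro h
    have hEz : E z z = 0 := hbij.1 (show Φ (E z z) = Φ 0 by rw [map_zero, ← hP, h])
    have := congrFun (congrFun hEz z) z
    simp [hE, Matrix.single] at this
  obtain ⟨i0, j0, hij⟩ : ∃ i j, P i j ≠ 0 := by
    by_contra h
    push_neg at h
    exact hPne (by ext i j; simpa using h i j)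
  set w : Fin d → ℂ := fun i => P i j0 with hw
  have hPw : P *ᵥ w = w := by
    ext i
    have := congrFun (congrFun hPP i) j0
    simpa [mul_apply, mulVec, dotProduct, hw] using this
  set c : ℝ := ∑ i, Complex.normSq (w i) with hc
  have hcpos : 0 < c := by
    rw [hc]
    apply Finset.sum_pos' (fun i _ => Complex.normSq_nonneg _)
    exact ⟨i0, Finset.mem_univ _, Complex.normSq_pos.mpr hij⟩
  set r : ℝ := Real.sqrt c with hr
  have hrpos : 0 < r := Real.sqrt_pos.mpr hcpos
  set v : Fin d → ℂ := ((r:ℂ)⁻¹) • w with hv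
  have hPv : P *ᵥ v = v := by
    rw [hv, mulVec_smul, hPw]
  have hv1 : star v ⬝ᵥ v = 1 := by
    have hsum : star w ⬝ᵥ w = (c : ℂ) := by
      rw [hc]
      push_cast
      simp only [dotProduct, Pi.star_apply]
      exact Finset.sum_congr rfl fun i _ => by
        rw [Complex.normSq_eq_conj_mul_self]; rfl
    rw [hv]
    simp only [dotProduct, Pi.smul_apply, Pi.star_apply, smul_eq_mul, star_mul']
    have : ∀ i, (star ((r:ℂ)⁻¹) * star (w i)) * ((r:ℂ)⁻¹ * w i)
        = (r:ℂ)⁻¹ * (r:ℂ)⁻¹ * (star (w i) * w i) := by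
      intro i
      have : star ((r:ℂ)⁻¹) = (r:ℂ)⁻¹ := by
        simp [Complex.star_def, Complex.conj_ofReal]
      rw [this]; ring
    rw [Finset.sum_congr rfl fun i _ => this i, ← Finset.mul_sum]
    have hsum' : (∑ i, star (w i) * w i) = (c:ℂ) := hsum
    have hr2 : (r:ℂ) * (r:ℂ) = (c:ℂ) := by
      norm_cast
      exact Real.mul_self_sqrt hcpos.le
    rw [hsum', ← hr2]
    have hrne : (r:ℂ) ≠ 0 := by
      simpa using hrpos.ne'
    field_simp
  have hvi0 : v i0 ≠ 0 := by
    rw [hv]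
    simp only [Pi.smul_apply, smul_eq_mul]
    exact mul_ne_zero (by simp [hrpos.ne']) hij
  set Q : Matrix (Fin d) (Fin d) ℂ := vecMulVec v (star v) with hQ
  have hQs : star Q = Q := by
    rw [hQ, sn_star_vecMulVec, star_star]
  have hPQ : P * Q = Q := by
    rw [hQ, sn_mul_vecMulVec, hPv]
  have hQP : Q * P = Q := by
    have := congrArg star hPQ
    rwa [Matrix.star_mul, hQs, hPs] at this
  -- minimality: Q = P
  obtain ⟨A, hA⟩ := hbij.2 Q
  have hEAE : E z z * A * E z z = A z z • E z z := by
    rw [hEvv, sn_vecMulVec_mul, sn_vecMulVec_mul_vecMulVec]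
    simp [dotProduct, vecMul, Pi.single_apply]
  have hQmu : Q = A z z • P := by
    have h1 : P * Q * P = Q := by rw [hPQ, hQP]
    rw [← hA, ← hΦmul, ← hΦmul, hEAE, LinearMap.map_smul] at h1
    rw [← hA, ← h1, hP]
  have hmu1 : A z z = 1 := by
    have h2 : Q *ᵥ v = v := by
      rw [hQ, sn_vecMulVec_mulVec, hv1, one_smul]
    rw [hQmu] at h2
    have := congrFun h2 i0
    simp only [smul_mulVec, Pi.smul_apply, smul_eq_mul] at this
    rw [congrFun hPv i0] at this
    have h4 : (A z z - 1) * v i0 = 0 := by linear_combination this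
    rcases mul_eq_zero.mp h4 with h | h
    · exact sub_eq_zero.mp h
    · exact absurd h hvi0
  have hQeqP : Q = P := by rw [hQmu, hmu1, one_smul]
  have hsingle : ∀ j : Fin d, star (Pi.single j (1:ℂ) : Fin d → ℂ) = Pi.single j 1 := by
    intro j; ext i; simp [Pi.single_apply, apply_ite]
  set U : Matrix (Fin d) (Fin d) ℂ :=
    ∑ j, Φ (E j z) * vecMulVec v (Pi.single j 1) with hU
  have hUstar : star U = ∑ j, vecMulVec (Pi.single j 1) (star v) * Φ (E z j) := by
    rw [hU, star_sum]
    refine Finset.sum_congr rfl fun j _ => ?_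
    rw [Matrix.star_mul, sn_star_vecMulVec, hsingle, ← hΦstar, hEstar]
  have hsUU : star U * U = 1 := by
    rw [hUstar, hU, Finset.sum_mul_sum]
    have key : ∀ k j : Fin d,
        (vecMulVec (Pi.single k 1) (star v) * Φ (E z k)) *
          (Φ (E j z) * vecMulVec v (Pi.single j 1))
        = if k = j then vecMulVec (Pi.single k 1) (Pi.single j 1) else 0 := by
      intro k j
      have hmid : Φ (E z k) * Φ (E j z) = if k = j then P else 0 := by
        rw [← hΦmul, hEmulE]
        by_cases h : k = j <;> simp [h, hP]
      rw [mul_assoc, ← mul_assoc (Φ (E z k)), hmid]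
      by_cases h : k = j
      · subst h
        rw [if_pos rfl, if_pos rfl, sn_mul_vecMulVec, hPv,
          sn_vecMulVec_mul_vecMulVec, hv1, one_smul]
      · rw [if_neg h, if_neg h, Matrix.zero_mul, mul_zero]
    rw [Finset.sum_congr rfl fun k _ => Finset.sum_congr rfl fun j _ => key k j]
    have inner : ∀ k : Fin d,
        (∑ j, if k = j then vecMulVec (Pi.single k (1:ℂ)) (Pi.single j 1) else 0)
          = vecMulVec (Pi.single k 1) (Pi.single k 1) := by
      intro k; simp
    rw [Finset.sum_congr rfl fun k _ => inner k]
    exact sn_sum_vecMulVec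
  have hUUs : U * star U = 1 := mul_eq_one_comm.mp hsUU
  refine ⟨U, hUUs, hsUU, fun X => ?_⟩
  have hbasis : ∀ a b, Φ (E a b) = U * E a b * star U := by
    intro a b
    have hUE : U * E a b = Φ (E a z) * vecMulVec v (Pi.single b 1) := by
      rw [hU, Finset.sum_mul]
      have key : ∀ j : Fin d, Φ (E j z) * vecMulVec v (Pi.single j 1) * E a b
          = if j = a then Φ (E a z) * vecMulVec v (Pi.single b 1) else 0 := by
        intro j
        rw [hEvv a b, mul_assoc, sn_vecMulVec_mul_vecMulVec, sn_single_dot]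
        by_cases h : j = a
        · subst h; rw [if_pos rfl, if_pos rfl, one_smul]
        · rw [if_neg h, if_neg h, zero_smul, mul_zero]
      rw [Finset.sum_congr rfl fun j _ => key j]
      simp
    rw [hUE, hUstar, Finset.mul_sum]
    have key : ∀ k : Fin d,
        Φ (E a z) * vecMulVec v (Pi.single b 1) *
          (vecMulVec (Pi.single k 1) (star v) * Φ (E z k))
        = if b = k then Φ (E a z) * Q * Φ (E z b) else 0 := by
      intro k
      rw [mul_assoc, ← mul_assoc (vecMulVec v (Pi.single b 1)),
        sn_vecMulVec_mul_vecMulVec, sn_single_dot]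
      by_cases h : b = k
      · subst h
        rw [if_pos rfl, if_pos rfl, one_smul, ← hQ, ← mul_assoc]
      · rw [if_neg h, if_neg h, zero_smul, Matrix.zero_mul, mul_zero]
    rw [Finset.sum_congr rfl fun k _ => key k]
    rw [Finset.sum_ite_eq]
    simp only [Finset.mem_univ, if_true]
    rw [hQeqP, hP, ← hΦmul, ← hΦmul, hEmulE]
    simp [hEmulE]
  have hsbm : ∀ (a b : Fin d) (t : ℂ), Matrix.single a b t = t • E a b := by
    intro a b t
    ext i j
    simp [hE, Matrix.single, Pi.smul_apply, smul_eq_mul, mul_ite]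
  conv_lhs => rw [matrix_eq_sum_single X]
  conv_rhs => rw [matrix_eq_sum_single X]
  rw [map_sum, Finset.mul_sum, Finset.sum_mul]
  refine Finset.sum_congr rfl fun a _ => ?_
  rw [map_sum, Finset.mul_sum, Finset.sum_mul]
  refine Finset.sum_congr rfl fun b _ => ?_
  rw [hsbm a b (X a b), LinearMap.map_smul, hbasis a b, mul_smul_comm,
    smul_mul_assoc]
end
end

section
/- Let ρ be a density operator on H_A ⊗ H_B, {P_α} a PVM on H_A, and set Z_α = Tr_A[(P_α ⊗ I)ρ] with support projections Q_α satisfying Q_α Q_β = 0 for α ≠ β. Then (P_α ⊗ (I − Q_α)) ρ = 0 and ρ (P_α ⊗ (I − Q_α)) = 0 for each α. -/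
open Matrix Kronecker Finset ComplexOrder

noncomputable section

/-- Partial trace over the first tensor factor. -/
def ptraceA {α β : Type*} [Fintype α] (ρ : Matrix (α × β) (α × β) ℂ) : Matrix β β ℂ :=
  Matrix.of fun j j' => ∑ i, ρ (i, j) (i, j')

lemma kron_conjT {m n : Type*} (A : Matrix m m ℂ) (B : Matrix n n ℂ) :
    (A ⊗ₖ B)ᴴ = Aᴴ ⊗ₖ Bᴴ := by
  ext ⟨i,j⟩ ⟨k,l⟩
  simp [conjTranspose_apply, kroneckerMap_apply, mul_comm]

lemma trace_kron {dA dB : ℕ} (A : Matrix (Fin dA) (Fin dA) ℂ)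
    (M : Matrix (Fin dB) (Fin dB) ℂ) (ρ : Matrix (Fin dA × Fin dB) (Fin dA × Fin dB) ℂ) :
    ((A ⊗ₖ M) * ρ).trace = (M * ptraceA ((A ⊗ₖ (1 : Matrix (Fin dB) (Fin dB) ℂ)) * ρ)).trace := by
  simp only [Matrix.trace, Matrix.diag, Matrix.mul_apply, ptraceA, Matrix.of_apply,
    kroneckerMap_apply, Fintype.sum_prod_type, Matrix.one_apply, mul_ite, mul_zero, ite_mul,
    zero_mul, Finset.sum_ite_eq, Finset.mem_univ, if_true, Finset.mul_sum, Finset.sum_mul]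
  rw [Finset.sum_comm]
  refine Finset.sum_congr rfl fun j _ => ?_
  trans ∑ i, ∑ j', ∑ i', A i i' * M j j' * ρ (i', j') (i, j)
  · exact Finset.sum_congr rfl fun i _ => Finset.sum_comm
  · rw [Finset.sum_comm]
    exact Finset.sum_congr rfl fun j' _ => Finset.sum_congr rfl fun i _ =>
      Finset.sum_congr rfl fun i' _ => by ring

lemma trace_self_eq_zero {m n : Type*} [Fintype m] [Fintype n] [DecidableEq n]
    (A : Matrix m n ℂ) (h : (Aᴴ * A).trace = 0) : A = 0 := by
  have h' : ∑ j, ∑ i, star (A i j) * A i j = 0 := by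
    simpa [Matrix.trace, Matrix.diag, Matrix.mul_apply, conjTranspose_apply] using h
  have hnn : ∀ j ∈ Finset.univ (α := n), (0:ℂ) ≤ ∑ i, star (A i j) * A i j := by
    intro j _
    exact Finset.sum_nonneg fun i _ => star_mul_self_nonneg _
  ext i j
  have h1 := (Finset.sum_eq_zero_iff_of_nonneg hnn).mp h' j (Finset.mem_univ j)
  have hnn2 : ∀ i ∈ Finset.univ (α := m), (0:ℂ) ≤ star (A i j) * A i j :=
    fun i _ => star_mul_self_nonneg _
  have h2 := (Finset.sum_eq_zero_iff_of_nonneg hnn2).mp h1 i (Finset.mem_univ i)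
  rcases mul_eq_zero.mp h2 with h3 | h3
  · simpa using congrArg star h3
  · simpa using h3

/-- If the conditional operators `Z_α = Tr_A[(P_α ⊗ I)ρ]` have pairwise
orthogonal support projections `Q_α`, then `(P_α ⊗ (I - Q_α)) ρ = 0 = ρ (P_α ⊗ (I - Q_α))`. -/
theorem stmt9 {dA dB : ℕ} {ι : Type} [Fintype ι] [DecidableEq ι]
    (ρ : Matrix (Fin dA × Fin dB) (Fin dA × Fin dB) ℂ)
    (hρ : ρ.PosSemidef) (htr : ρ.trace = 1)
    (P : ι → Matrix (Fin dA) (Fin dA) ℂ)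
    (hPherm : ∀ α, (P α).IsHermitian) (hPidem : ∀ α, P α * P α = P α)
    (hPorth : ∀ α β, α ≠ β → P α * P β = 0) (hPsum : ∑ α, P α = 1)
    (Z : ι → Matrix (Fin dB) (Fin dB) ℂ)
    (hZ : ∀ α, Z α = ptraceA ((P α ⊗ₖ (1 : Matrix (Fin dB) (Fin dB) ℂ)) * ρ))
    (Q : ι → Matrix (Fin dB) (Fin dB) ℂ)
    (hQherm : ∀ α, (Q α).IsHermitian) (hQidem : ∀ α, Q α * Q α = Q α)
    (hQsupp : ∀ α, Q α * Z α = Z α)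
    (hQrange : ∀ α, LinearMap.range (Q α).mulVecLin = LinearMap.range (Z α).mulVecLin)
    (hQorth : ∀ α β, α ≠ β → Q α * Q β = 0) :
    ∀ α, (P α ⊗ₖ (1 - Q α)) * ρ = 0 ∧ ρ * (P α ⊗ₖ (1 - Q α)) = 0 := by
  intro α
  set E : Matrix (Fin dA × Fin dB) (Fin dA × Fin dB) ℂ := P α ⊗ₖ (1 - Q α) with hE
  have hEH : Eᴴ = E := by
    rw [hE, kron_conjT, (hPherm α).eq]
    congr 1
    rw [conjTranspose_sub, conjTranspose_one, (hQherm α).eq]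
  have hEE : E * E = E := by
    rw [hE, ← Matrix.mul_kronecker_mul, hPidem]
    congr 1
    have : (1 - Q α) * (1 - Q α) = 1 - Q α := by
      rw [sub_mul, mul_sub, mul_sub, mul_one, one_mul, hQidem α]; simp
    rw [this]
  have htr0 : (E * ρ).trace = 0 := by
    rw [hE, trace_kron, ← hZ, sub_mul, one_mul, hQsupp, sub_self, trace_zero]
  obtain ⟨N, hN⟩ : ∃ N : Matrix (Fin dA × Fin dB) (Fin dA × Fin dB) ℂ, ρ = Nᴴ * N := by
    open scoped MatrixOrder Matrix.Norms.L2Operator in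
    exact CStarAlgebra.nonneg_iff_eq_star_mul_self.mp hρ.nonneg
  have hNE : N * E = 0 := by
    apply trace_self_eq_zero
    have : (N * E)ᴴ * (N * E) = E * ρ * E := by
      rw [conjTranspose_mul, hEH, hN]
      noncomm_ring
    rw [this, Matrix.trace_mul_comm, ← Matrix.mul_assoc, hEE, htr0]
  have hρE : ρ * E = 0 := by
    rw [hN, Matrix.mul_assoc, hNE, Matrix.mul_zero]
  have hEρ : E * ρ = 0 := by
    have := congrArg conjTranspose hρE
    rwa [conjTranspose_mul, hEH, hρ.isHermitian.eq, conjTranspose_zero] at this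
  exact ⟨hEρ, hρE⟩
end
end

section
/- Let ρ be a density operator on H_A ⊗ H_B that is a zero-uncertainty state for a PVM {P_α} on H_A (i.e. the conditional operators Z_α = Tr_A[(P_α ⊗ I)ρ] have pairwise orthogonal supports). Then the reduced state ρ_A = Tr_B ρ commutes with every P_α: P_α ρ_A = ρ_A P_α. -/
open Matrix Kronecker Finset ComplexOrder

noncomputable section

/-- Partial trace over the second tensor factor. -/
def ptraceB {α β : Type*} [Fintype β] (ρ : Matrix (α × β) (α × β) ℂ) : Matrix α α ℂ :=
  Matrix.of fun i i' => ∑ j, ρ (i, j) (i', j)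

section Helpers

variable {dA dB : ℕ}

lemma kron_one_apply (B : Matrix (Fin dA) (Fin dA) ℂ) (m i : Fin dA) (n j : Fin dB) :
    (B ⊗ₖ (1 : Matrix (Fin dB) (Fin dB) ℂ)) (m, n) (i, j)
      = B m i * (1 : Matrix (Fin dB) (Fin dB) ℂ) n j := rfl

lemma ptraceB_kmul (B : Matrix (Fin dA) (Fin dA) ℂ)
    (A : Matrix (Fin dA × Fin dB) (Fin dA × Fin dB) ℂ) :
    ptraceB ((B ⊗ₖ (1 : Matrix (Fin dB) (Fin dB) ℂ)) * A) = B * ptraceB A := by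
  ext i i'
  simp only [ptraceB, Matrix.of_apply, Matrix.mul_apply, Fintype.sum_prod_type, kron_one_apply,
    Matrix.one_apply, mul_ite, mul_one, mul_zero, ite_mul, zero_mul, Finset.sum_ite_eq,
    Finset.mem_univ, if_true]
  rw [Finset.sum_comm]
  exact Finset.sum_congr rfl fun m _ => by rw [Finset.mul_sum]

lemma ptraceB_mulk (A : Matrix (Fin dA × Fin dB) (Fin dA × Fin dB) ℂ)
    (C : Matrix (Fin dA) (Fin dA) ℂ) :
    ptraceB (A * (C ⊗ₖ (1 : Matrix (Fin dB) (Fin dB) ℂ))) = ptraceB A * C := by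
  ext i i'
  simp only [ptraceB, Matrix.of_apply, Matrix.mul_apply, Fintype.sum_prod_type, kron_one_apply,
    Matrix.one_apply, mul_ite, mul_one, mul_zero, Finset.sum_ite_eq, Finset.sum_ite_eq',
    Finset.mem_univ, if_true]
  rw [Finset.sum_comm]
  exact Finset.sum_congr rfl fun m _ => by rw [Finset.sum_mul]

lemma ptraceA_comm (A : Matrix (Fin dA × Fin dB) (Fin dA × Fin dB) ℂ)
    (B : Matrix (Fin dA) (Fin dA) ℂ) :
    ptraceA ((B ⊗ₖ (1 : Matrix (Fin dB) (Fin dB) ℂ)) * A)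
      = ptraceA (A * (B ⊗ₖ (1 : Matrix (Fin dB) (Fin dB) ℂ))) := by
  ext j j'
  simp only [ptraceA, Matrix.of_apply, Matrix.mul_apply, Fintype.sum_prod_type, kron_one_apply,
    Matrix.one_apply, mul_ite, mul_one, mul_zero, ite_mul, zero_mul, Finset.sum_ite_eq,
    Finset.sum_ite_eq', Finset.mem_univ, if_true]
  rw [Finset.sum_comm]
  exact Finset.sum_congr rfl fun m _ => Finset.sum_congr rfl fun i _ => mul_comm _ _

lemma kron_one_conjTranspose (B : Matrix (Fin dA) (Fin dA) ℂ) :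
    (B ⊗ₖ (1 : Matrix (Fin dB) (Fin dB) ℂ))ᴴ = Bᴴ ⊗ₖ (1 : Matrix (Fin dB) (Fin dB) ℂ) := by
  ext ⟨m, n⟩ ⟨i, j⟩
  simp only [Matrix.conjTranspose_apply, kron_one_apply, Matrix.one_apply, mul_ite, mul_one,
    mul_zero]
  by_cases h : n = j <;> simp [h, eq_comm]

lemma key_lemma (W V : Matrix (Fin dA × Fin dB) (Fin dA × Fin dB) ℂ)
    (h : ptraceA (Wᴴ * W) * ptraceA (Vᴴ * V) = 0) :
    ptraceB (Wᴴ * V) = 0 := by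
  set F : Matrix ((Fin dA × Fin dB) × Fin dA) (Fin dB) ℂ :=
    Matrix.of fun s j => W s.1 (s.2, j) with hFdef
  set G : Matrix ((Fin dA × Fin dB) × Fin dA) (Fin dB) ℂ :=
    Matrix.of fun s j => V s.1 (s.2, j) with hGdef
  have hF : ptraceA (Wᴴ * W) = Fᴴ * F := by
    ext j j'
    simp only [ptraceA, Matrix.of_apply, Matrix.mul_apply, Matrix.conjTranspose_apply,
      Fintype.sum_prod_type, hFdef]
    rw [Finset.sum_comm]
    exact Finset.sum_congr rfl fun _ _ => Finset.sum_comm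
  have hG : ptraceA (Vᴴ * V) = Gᴴ * G := by
    ext j j'
    simp only [ptraceA, Matrix.of_apply, Matrix.mul_apply, Matrix.conjTranspose_apply,
      Fintype.sum_prod_type, hGdef]
    rw [Finset.sum_comm]
    exact Finset.sum_congr rfl fun _ _ => Finset.sum_comm
  have h2 : F * Gᴴ = 0 := by
    rw [← Matrix.mul_conjTranspose_mul_self_eq_zero G F,
      ← Matrix.conjTranspose_mul_self_mul_eq_zero F (Gᴴ * G), ← hF, ← hG]
    exact h
  ext i i'
  show ∑ j, (Wᴴ * V) (i, j) (i', j) = 0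
  simp only [Matrix.mul_apply, Matrix.conjTranspose_apply]
  rw [Finset.sum_comm]
  refine Finset.sum_eq_zero fun p _ => ?_
  have h3 : (F * Gᴴ) (p, i) (p, i') = 0 := by rw [h2]; rfl
  have h4 := congrArg (starRingEnd ℂ) h3
  simpa only [Matrix.mul_apply, Matrix.conjTranspose_apply, hFdef, hGdef, Matrix.of_apply,
    map_sum, _root_.map_mul, starRingEnd_apply, star_star, map_zero] using h4

end Helpers

/-- For a zero-uncertainty state `ρ` of a PVM `{P_α}`, the reduced state
`ρ_A = Tr_B ρ` commutes with every `P_α`. -/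
theorem stmt10 {dA dB : ℕ} {ι : Type} [Fintype ι] [DecidableEq ι]
    (ρ : Matrix (Fin dA × Fin dB) (Fin dA × Fin dB) ℂ)
    (hρ : ρ.PosSemidef) (htr : ρ.trace = 1)
    (P : ι → Matrix (Fin dA) (Fin dA) ℂ)
    (hPherm : ∀ α, (P α).IsHermitian) (hPidem : ∀ α, P α * P α = P α)
    (hPorth : ∀ α β, α ≠ β → P α * P β = 0) (hPsum : ∑ α, P α = 1)
    (hZUS : ∀ α β, α ≠ β →
      ptraceA ((P α ⊗ₖ (1 : Matrix (Fin dB) (Fin dB) ℂ)) * ρ) *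
        ptraceA ((P β ⊗ₖ (1 : Matrix (Fin dB) (Fin dB) ℂ)) * ρ) = 0) :
    ∀ α, P α * ptraceB ρ = ptraceB ρ * P α := by
  obtain ⟨M, hM⟩ : ∃ M : Matrix (Fin dA × Fin dB) (Fin dA × Fin dB) ℂ, ρ = Mᴴ * M := by
    open scoped MatrixOrder in exact CStarAlgebra.nonneg_iff_eq_star_mul_self.mp hρ.nonneg
  have hcross : ∀ α β, α ≠ β → P α * ptraceB ρ * P β = 0 := by
    intro α β hne
    have hconj : ∀ γ δ : ι,
        (M * (P γ ⊗ₖ (1 : Matrix (Fin dB) (Fin dB) ℂ)))ᴴ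
            * (M * (P δ ⊗ₖ (1 : Matrix (Fin dB) (Fin dB) ℂ)))
          = (P γ ⊗ₖ (1 : Matrix (Fin dB) (Fin dB) ℂ)) * ρ
            * (P δ ⊗ₖ (1 : Matrix (Fin dB) (Fin dB) ℂ)) := by
      intro γ δ
      rw [Matrix.conjTranspose_mul, kron_one_conjTranspose, (hPherm γ).eq, hM]
      simp only [Matrix.mul_assoc]
    have hW : ∀ γ : ι,
        ptraceA ((M * (P γ ⊗ₖ (1 : Matrix (Fin dB) (Fin dB) ℂ)))ᴴ
            * (M * (P γ ⊗ₖ (1 : Matrix (Fin dB) (Fin dB) ℂ))))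
          = ptraceA ((P γ ⊗ₖ (1 : Matrix (Fin dB) (Fin dB) ℂ)) * ρ) := by
      intro γ
      rw [hconj γ γ, ← ptraceA_comm ((P γ ⊗ₖ (1 : Matrix (Fin dB) (Fin dB) ℂ)) * ρ) (P γ),
        ← Matrix.mul_assoc, ← Matrix.mul_kronecker_mul, hPidem γ, Matrix.one_mul]
    have h0 := key_lemma (M * (P α ⊗ₖ (1 : Matrix (Fin dB) (Fin dB) ℂ)))
      (M * (P β ⊗ₖ (1 : Matrix (Fin dB) (Fin dB) ℂ)))
      (by rw [hW α, hW β]; exact hZUS α β hne)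
    rw [hconj α β, ptraceB_mulk, ptraceB_kmul] at h0
    exact h0
  intro α
  have hL : P α * ptraceB ρ = P α * ptraceB ρ * P α := by
    conv_lhs => rw [← mul_one (P α * ptraceB ρ), ← hPsum, Finset.mul_sum]
    rw [Finset.sum_eq_single α (fun β _ hβ => hcross α β fun h => hβ h.symm)
      (fun h => absurd (Finset.mem_univ α) h)]
  have hR : ptraceB ρ * P α = P α * ptraceB ρ * P α := by
    conv_lhs => rw [← one_mul (ptraceB ρ * P α), ← hPsum, Finset.sum_mul]
    rw [Finset.sum_eq_single α (fun β _ hβ => by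
        rw [← Matrix.mul_assoc]; exact hcross β α hβ)
      (fun h => absurd (Finset.mem_univ α) h)]
    rw [Matrix.mul_assoc]
  rw [hL, hR]
end
end

section
/- Let ρ be a density operator on H_A ⊗ H_B with dim H_A = d, and let 𝒦 be a family of PVMs on H_A such that ρ is a ZUS for each PVM in 𝒦 and the *-algebra generated by all projections in 𝒦 is all of B(H_A). Then ρ_A = Tr_B ρ = (1/d) I_A. -/
open Matrix Kronecker Finset ComplexOrder

noncomputable section

set_option linter.unusedSectionVars false

section aux
variable {α β γ : Type*} [Fintype α] [Fintype β] [Fintype γ] [DecidableEq α] [DecidableEq β]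

lemma kron_mul_apply (X : Matrix α α ℂ) (Y : Matrix (α × β) (α × β) ℂ) (p q : α × β) :
    ((X ⊗ₖ (1 : Matrix β β ℂ)) * Y) p q = ∑ k, X p.1 k * Y (k, p.2) q := by
  simp [Matrix.mul_apply, Fintype.sum_prod_type, Matrix.one_apply, mul_ite, ite_mul,
    Finset.sum_ite_eq', Finset.sum_ite_eq]

lemma mul_kron_apply (X : Matrix α α ℂ) (Y : Matrix (α × β) (α × β) ℂ) (p q : α × β) :
    (Y * (X ⊗ₖ (1 : Matrix β β ℂ))) p q = ∑ k, Y p (k, q.2) * X k q.1 := by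
  simp [Matrix.mul_apply, Fintype.sum_prod_type, Matrix.one_apply, mul_ite, ite_mul,
    Finset.sum_ite_eq', Finset.sum_ite_eq]

lemma ptraceA_cyclic (X : Matrix α α ℂ) (Y : Matrix (α × β) (α × β) ℂ) :
    ptraceA ((X ⊗ₖ (1 : Matrix β β ℂ)) * Y) = ptraceA (Y * (X ⊗ₖ 1)) := by
  ext j j'
  simp only [ptraceA, Matrix.of_apply, kron_mul_apply, mul_kron_apply]
  rw [Finset.sum_comm]
  simp [mul_comm]

lemma kron_conjTranspose (X : Matrix α α ℂ) :
    (X ⊗ₖ (1 : Matrix β β ℂ))ᴴ = Xᴴ ⊗ₖ 1 := by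
  ext p q
  simp [Matrix.conjTranspose_apply, Matrix.one_apply, apply_ite (starRingEnd ℂ), eq_comm]

lemma ptraceB_kron_mul (X : Matrix α α ℂ) (Y : Matrix (α × β) (α × β) ℂ) :
    ptraceB ((X ⊗ₖ (1 : Matrix β β ℂ)) * Y) = X * ptraceB Y := by
  ext i i'
  have L : ptraceB ((X ⊗ₖ (1 : Matrix β β ℂ)) * Y) i i' = ∑ j, ∑ k, X i k * Y (k, j) (i', j) := by
    simp [ptraceB, kron_mul_apply]
  have R : (X * ptraceB Y) i i' = ∑ k, ∑ j, X i k * Y (k, j) (i', j) := by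
    simp [ptraceB, Matrix.mul_apply, Finset.mul_sum]
  rw [L, R, Finset.sum_comm]

lemma ptraceB_mul_kron (X : Matrix α α ℂ) (Y : Matrix (α × β) (α × β) ℂ) :
    ptraceB (Y * (X ⊗ₖ (1 : Matrix β β ℂ))) = ptraceB Y * X := by
  ext i i'
  have L : ptraceB (Y * (X ⊗ₖ (1 : Matrix β β ℂ))) i i' = ∑ j, ∑ k, Y (i, j) (k, j) * X k i' := by
    simp [ptraceB, mul_kron_apply]
  have R : (ptraceB Y * X) i i' = ∑ k, ∑ j, Y (i, j) (k, j) * X k i' := by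
    simp [ptraceB, Matrix.mul_apply, Finset.sum_mul]
  rw [L, R, Finset.sum_comm]

lemma trace_ptraceB (Y : Matrix (α × β) (α × β) ℂ) : (ptraceB Y).trace = Y.trace := by
  simp [ptraceB, Matrix.trace, Matrix.diag, Fintype.sum_prod_type]

lemma sum4_swap {A B : Type*} [Fintype A] [Fintype B] (F : A → A → B → B → ℂ) :
    ∑ j : A, ∑ j' : A, ∑ a : B, ∑ b : B, F j j' a b
      = ∑ a : B, ∑ b : B, ∑ j : A, ∑ j' : A, F j j' a b := by
  calc ∑ j : A, ∑ j' : A, ∑ a : B, ∑ b : B, F j j' a b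
      = ∑ j : A, ∑ a : B, ∑ j' : A, ∑ b : B, F j j' a b :=
        Finset.sum_congr rfl fun _ _ => Finset.sum_comm
    _ = ∑ a : B, ∑ j : A, ∑ j' : A, ∑ b : B, F j j' a b := Finset.sum_comm
    _ = ∑ a : B, ∑ j : A, ∑ b : B, ∑ j' : A, F j j' a b :=
        Finset.sum_congr rfl fun _ _ => Finset.sum_congr rfl fun _ _ => Finset.sum_comm
    _ = ∑ a : B, ∑ b : B, ∑ j : A, ∑ j' : A, F j j' a b :=
        Finset.sum_congr rfl fun _ _ => Finset.sum_comm

lemma core (M N : Matrix γ (α × β) ℂ)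
    (h : ptraceA (Mᴴ * M) * ptraceA (Nᴴ * N) = 0)
    (i k : α) (x y : γ) :
    ∑ j, star (M x (i, j)) * N y (k, j) = 0 := by
  set z : (α × γ) → (α × γ) → ℂ :=
    fun a b => ∑ j, star (M a.2 (a.1, j)) * N b.2 (b.1, j) with hz
  have key : ∑ a : α × γ, ∑ b : α × γ, star (z a b) * z a b = 0 := by
    have h0 : (ptraceA (Mᴴ * M) * ptraceA (Nᴴ * N)).trace = 0 := by rw [h]; simp
    rw [← h0]
    have hS : ∀ j j', ptraceA (Mᴴ * M) j j'
        = ∑ a : α × γ, star (M a.2 (a.1, j)) * M a.2 (a.1, j') := by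
      intro j j'; rw [Fintype.sum_prod_type]
      simp [ptraceA, Matrix.mul_apply]
    have hT : ∀ j j', ptraceA (Nᴴ * N) j j'
        = ∑ b : α × γ, star (N b.2 (b.1, j)) * N b.2 (b.1, j') := by
      intro j j'; rw [Fintype.sum_prod_type]
      simp [ptraceA, Matrix.mul_apply]
    have e1 : (ptraceA (Mᴴ * M) * ptraceA (Nᴴ * N)).trace
        = ∑ j, ∑ j', ∑ a : α × γ, ∑ b : α × γ,
            (star (M a.2 (a.1, j)) * M a.2 (a.1, j'))
              * (star (N b.2 (b.1, j')) * N b.2 (b.1, j)) := by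
      simp only [Matrix.trace, Matrix.diag_apply, Matrix.mul_apply]
      refine Finset.sum_congr rfl fun j _ => Finset.sum_congr rfl fun j' _ => ?_
      rw [hS, hT, Finset.sum_mul_sum]
    rw [e1, sum4_swap]
    refine Finset.sum_congr rfl fun a _ => Finset.sum_congr rfl fun b _ => ?_
    rw [hz]
    simp only [star_sum, star_mul', star_star]
    rw [Finset.sum_mul_sum, Finset.sum_comm]
    exact Finset.sum_congr rfl fun j _ => Finset.sum_congr rfl fun j' _ => by ring
  have h1 : ∑ b : α × γ, star (z (i, x) b) * z (i, x) b = 0 :=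
    (Finset.sum_eq_zero_iff_of_nonneg fun a _ =>
        Finset.sum_nonneg fun b _ => star_mul_self_nonneg _).mp key (i, x) (mem_univ _)
  have h2 : star (z (i, x) (k, y)) * z (i, x) (k, y) = 0 :=
    (Finset.sum_eq_zero_iff_of_nonneg fun b _ =>
        star_mul_self_nonneg _).mp h1 (k, y) (mem_univ _)
  have h3 : z (i, x) (k, y) = 0 := by
    rcases mul_eq_zero.mp h2 with h' | h'
    · simpa using congrArg star h'
    · exact h'
  simpa [hz] using h3

end aux

/-- If `ρ` is a common ZUS for a family of PVMs whose projections generate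
`B(H_A)` as a *-algebra, then `ρ_A = (1/d) I`. -/
theorem stmt11 {d dB : ℕ} {ι : Type} [Fintype ι] {κ : ι → Type}
    [∀ i, Fintype (κ i)] [∀ i, DecidableEq (κ i)]
    (ρ : Matrix (Fin d × Fin dB) (Fin d × Fin dB) ℂ)
    (hρ : ρ.PosSemidef) (htr : ρ.trace = 1)
    (P : (i : ι) → κ i → Matrix (Fin d) (Fin d) ℂ)
    (hPherm : ∀ i α, (P i α).IsHermitian) (hPidem : ∀ i α, P i α * P i α = P i α)
    (hPorth : ∀ i α β, α ≠ β → P i α * P i β = 0) (hPsum : ∀ i, ∑ α, P i α = 1)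
    (hZUS : ∀ i α β, α ≠ β →
      ptraceA ((P i α ⊗ₖ (1 : Matrix (Fin dB) (Fin dB) ℂ)) * ρ) *
        ptraceA ((P i β ⊗ₖ (1 : Matrix (Fin dB) (Fin dB) ℂ)) * ρ) = 0)
    (hgen : StarAlgebra.adjoin ℂ {X | ∃ i α, X = P i α} = ⊤) :
    ptraceB ρ = ((d : ℂ))⁻¹ • 1 := by
  obtain ⟨B, hB⟩ : ∃ B : Matrix (Fin d × Fin dB) (Fin d × Fin dB) ℂ, ρ = Bᴴ * B := by
    open scoped MatrixOrder Matrix.Norms.L2Operator in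
    exact CStarAlgebra.nonneg_iff_eq_star_mul_self.mp hρ.nonneg
  set ρA := ptraceB ρ with hρA
  -- the "slice" matrices
  set M : (i : ι) → κ i → Matrix (Fin d × Fin dB) (Fin d × Fin dB) ℂ :=
    fun i α => B * (P i α ⊗ₖ (1 : Matrix (Fin dB) (Fin dB) ℂ)) with hM
  have hkronH : ∀ i α, (P i α ⊗ₖ (1 : Matrix (Fin dB) (Fin dB) ℂ))ᴴ
      = P i α ⊗ₖ (1 : Matrix (Fin dB) (Fin dB) ℂ) := by
    intro i α; rw [kron_conjTranspose, (hPherm i α).eq]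
  have hMM : ∀ i α, (M i α)ᴴ * (M i α)
      = (P i α ⊗ₖ (1 : Matrix (Fin dB) (Fin dB) ℂ)) * ρ
          * (P i α ⊗ₖ (1 : Matrix (Fin dB) (Fin dB) ℂ)) := by
    intro i α
    rw [hM]
    rw [Matrix.conjTranspose_mul, hkronH, hB]
    noncomm_ring
  have hMN : ∀ i α β, (M i α)ᴴ * (M i β)
      = (P i α ⊗ₖ (1 : Matrix (Fin dB) (Fin dB) ℂ)) * ρ
          * (P i β ⊗ₖ (1 : Matrix (Fin dB) (Fin dB) ℂ)) := by
    intro i α β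
    rw [hM]
    rw [Matrix.conjTranspose_mul, hkronH, hB]
    noncomm_ring
  -- ptraceA ((P⊗1)ρ) = ptraceA (MᴴM)
  have hptr : ∀ i α, ptraceA ((M i α)ᴴ * (M i α))
      = ptraceA ((P i α ⊗ₖ (1 : Matrix (Fin dB) (Fin dB) ℂ)) * ρ) := by
    intro i α
    rw [hMM, ← ptraceA_cyclic, ← Matrix.mul_assoc, ← Matrix.mul_kronecker_mul,
      hPidem, Matrix.one_mul]
  -- key vanishing of cross blocks
  have hcross : ∀ i α β, α ≠ β → P i α * ρA * P i β = 0 := by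
    intro i α β hab
    have hz := hZUS i α β hab
    rw [← hptr i α, ← hptr i β] at hz
    have hc := core (M i α) (M i β) hz
    have : P i α * ρA * P i β = ptraceB ((M i α)ᴴ * (M i β)) := by
      rw [hMN, hρA, ptraceB_mul_kron, ptraceB_kron_mul]
    rw [this]
    ext a a'
    have : ptraceB ((M i α)ᴴ * (M i β)) a a'
        = ∑ x, ∑ j, star (M i α x (a, j)) * M i β x (a', j) := by
      simp only [ptraceB, Matrix.of_apply, Matrix.mul_apply, Matrix.conjTranspose_apply]
      rw [Finset.sum_comm]
    rw [this]
    simp only [Matrix.zero_apply]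
    exact Finset.sum_eq_zero fun x _ => hc a a' x x
  -- ρA commutes with each P i α
  have hcomm : ∀ i α, P i α * ρA = ρA * P i α := by
    intro i γ
    have hdiag : ρA = ∑ α, P i α * ρA * P i α := by
      have step : ∀ α, ∑ β, P i α * ρA * P i β = P i α * ρA := by
        intro α
        rw [← Finset.mul_sum, hPsum i, Matrix.mul_one]
      calc ρA = (∑ α, P i α) * ρA := by rw [hPsum, Matrix.one_mul]
        _ = ∑ α, P i α * ρA := Finset.sum_mul _ _ _
        _ = ∑ α, ∑ β, P i α * ρA * P i β :=
            Finset.sum_congr rfl fun α _ => (step α).symm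
        _ = ∑ α, P i α * ρA * P i α :=
            Finset.sum_congr rfl fun α _ => Finset.sum_eq_single α
              (fun β _ hb => hcross i α β (Ne.symm hb)) (by simp)
    have hl : P i γ * ρA = P i γ * ρA * P i γ := by
      conv_lhs => rw [hdiag, Finset.mul_sum]
      rw [Finset.sum_eq_single γ]
      · rw [← Matrix.mul_assoc, ← Matrix.mul_assoc, hPidem]
      · intro β _ hb
        rw [← Matrix.mul_assoc, ← Matrix.mul_assoc, hPorth i γ β (Ne.symm hb),
          Matrix.zero_mul, Matrix.zero_mul]
      · simp
    have hr : ρA * P i γ = P i γ * ρA * P i γ := by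
      conv_lhs => rw [hdiag, Finset.sum_mul]
      rw [Finset.sum_eq_single γ]
      · rw [Matrix.mul_assoc, hPidem]
      · intro β _ hb
        rw [Matrix.mul_assoc, hPorth i β γ hb, Matrix.mul_zero]
      · simp
    exact hl.trans hr.symm
  -- ρA is Hermitian
  have hρAH : star ρA = ρA := by
    rw [Matrix.star_eq_conjTranspose]
    ext a a'
    simp only [hρA, ptraceB, Matrix.conjTranspose_apply, Matrix.of_apply, star_sum]
    exact Finset.sum_congr rfl fun j _ => by
      rw [← Matrix.conjTranspose_apply, hρ.1.eq]
  -- every matrix commutes with ρA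
  have hall : ∀ X : Matrix (Fin d) (Fin d) ℂ, ρA * X = X * ρA := by
    have hle : StarAlgebra.adjoin ℂ {X | ∃ i α, X = P i α}
        ≤ StarSubalgebra.centralizer ℂ {ρA} := by
      apply StarAlgebra.adjoin_le
      rintro X ⟨i, α, rfl⟩
      simp only [SetLike.mem_coe]
      rw [StarSubalgebra.mem_centralizer_iff]
      rintro g hg
      rcases hg with rfl
      exact ⟨(hcomm i α).symm, by rw [hρAH]; exact (hcomm i α).symm⟩
    rw [hgen] at hle
    intro X
    have hX : X ∈ StarSubalgebra.centralizer ℂ {ρA} := hle (by trivial)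
    exact ((StarSubalgebra.mem_centralizer_iff ℂ).mp hX ρA rfl).1
  -- hence ρA is scalar
  obtain ⟨c, hc⟩ := Matrix.mem_range_scalar_of_commute_single
    (M := ρA) (fun a b _ => (hall _).symm)
  have htrA : ρA.trace = 1 := by rw [hρA, trace_ptraceB, htr]
  have hd : (d : ℂ) ≠ 0 := by
    rintro hd0
    have : d = 0 := by exact_mod_cast hd0
    subst this
    rw [Matrix.trace] at htr
    simp [Fintype.sum_prod_type] at htr
  have hcd : (d : ℂ) * c = 1 := by
    rw [← htrA, ← hc]
    simp [Matrix.trace, Matrix.scalar, Finset.sum_const, nsmul_eq_mul, mul_comm]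
  have hcval : c = ((d : ℂ))⁻¹ := by
    field_simp at hcd ⊢
    linear_combination hcd
  rw [← hc, hcval]
  ext a b
  simp [Matrix.scalar, Matrix.smul_apply, Matrix.one_apply, Matrix.diagonal_apply]
end
end

section
/- Let 𝒜 ⊆ B(H_A) be a unital *-subalgebra of a finite-dimensional matrix algebra, ρ a density operator on H_A ⊗ H_B, ρ_B = Tr_A ρ with support S, and φ(X) = ρ_B^{-1/2} Tr_A[(Xᵀ ⊗ I)ρ] ρ_B^{-1/2} restricted to 𝒜ᵀ (with inverses taken on S). Then ρ is an 𝒜-ZUS (ZUS for every PVM contained in 𝒜) if and only if φ : 𝒜ᵀ → B(S) is a unital *-homomorphism whose image commutes with ρ_B. -/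
open Matrix Kronecker Finset ComplexOrder

noncomputable section

set_option linter.unusedSectionVars false
set_option maxHeartbeats 1000000

lemma star_mul_self_complex (z : ℂ) : z * star z = ((Complex.normSq z : ℝ) : ℂ) := by
  rw [Complex.star_def]; exact Complex.mul_conj z

/-- trace of `M * Mᴴ` as a sum of norm squares. -/
lemma trace_mul_conjTranspose_self' {n m : Type*} [Fintype n] [Fintype m]
    (M : Matrix n m ℂ) :
    (M * Mᴴ).trace = ((∑ i, ∑ j, Complex.normSq (M i j) : ℝ) : ℂ) := by
  simp only [Matrix.trace, Matrix.diag, Matrix.mul_apply, Matrix.conjTranspose_apply,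
    ← Complex.star_def, star_mul_self_complex]
  push_cast
  rfl

/-- a family with `∑ Dᵢ Dᵢᴴ = 0` is identically zero. -/
lemma eq_zero_of_sum_mul_conjTranspose {ι n m : Type*} [Fintype ι] [Fintype n] [Fintype m]
    (D : ι → Matrix n m ℂ) (h : ∑ i, D i * (D i)ᴴ = 0) : ∀ i, D i = 0 := by
  have htr : ∑ i, ((∑ a, ∑ b, Complex.normSq (D i a b) : ℝ) : ℂ) = 0 := by
    simp_rw [← trace_mul_conjTranspose_self', ← Matrix.trace_sum, h, Matrix.trace_zero]
  have htr' : ∑ i, (∑ a, ∑ b, Complex.normSq (D i a b)) = (0 : ℝ) := by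
    exact_mod_cast htr
  have hnn : ∀ i ∈ Finset.univ, (0:ℝ) ≤ ∑ a, ∑ b, Complex.normSq (D i a b) :=
    fun i _ => Finset.sum_nonneg fun a _ => Finset.sum_nonneg fun b _ => Complex.normSq_nonneg _
  intro i
  have hi : ∑ a, ∑ b, Complex.normSq (D i a b) = 0 :=
    (Finset.sum_eq_zero_iff_of_nonneg hnn).mp htr' i (Finset.mem_univ i)
  ext a b
  have ha : ∀ a ∈ Finset.univ, (0:ℝ) ≤ ∑ b, Complex.normSq (D i a b) :=
    fun a _ => Finset.sum_nonneg fun b _ => Complex.normSq_nonneg _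
  have h2 := (Finset.sum_eq_zero_iff_of_nonneg ha).mp hi a (Finset.mem_univ a)
  have hb : ∀ b ∈ Finset.univ, (0:ℝ) ≤ Complex.normSq (D i a b) :=
    fun b _ => Complex.normSq_nonneg _
  have h3 := (Finset.sum_eq_zero_iff_of_nonneg hb).mp h2 b (Finset.mem_univ b)
  simpa using Complex.normSq_eq_zero.mp h3

lemma eq_zero_of_trace_mul_conjTranspose {n m : Type*} [Fintype n] [Fintype m]
    (M : Matrix n m ℂ) (h : (M * Mᴴ).trace = 0) : M = 0 := by
  have htr' : (∑ a, ∑ b, Complex.normSq (M a b)) = (0 : ℝ) := by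
    have := h
    rw [trace_mul_conjTranspose_self'] at this
    exact_mod_cast this
  ext a b
  have ha : ∀ a ∈ Finset.univ, (0:ℝ) ≤ ∑ b, Complex.normSq (M a b) :=
    fun a _ => Finset.sum_nonneg fun b _ => Complex.normSq_nonneg _
  have h2 := (Finset.sum_eq_zero_iff_of_nonneg ha).mp htr' a (Finset.mem_univ a)
  have hb : ∀ b ∈ Finset.univ, (0:ℝ) ≤ Complex.normSq (M a b) :=
    fun b _ => Complex.normSq_nonneg _
  have h3 := (Finset.sum_eq_zero_iff_of_nonneg hb).mp h2 b (Finset.mem_univ b)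
  simpa using Complex.normSq_eq_zero.mp h3

lemma psd_sqrt_exists {n : Type*} [Fintype n] [DecidableEq n]
    {A : Matrix n n ℂ} (hA : A.PosSemidef) : ∃ B : Matrix n n ℂ, B.IsHermitian ∧ B * B = A := by
  set U : Matrix n n ℂ := (hA.1.eigenvectorUnitary : Matrix n n ℂ) with hU
  have hU2 : star U * U = 1 := (Matrix.mem_unitaryGroup_iff').mp (hA.1.eigenvectorUnitary).2
  set D : Matrix n n ℂ := Matrix.diagonal (fun i => ((Real.sqrt (hA.1.eigenvalues i) : ℝ) : ℂ))
    with hD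
  refine ⟨U * D * star U, ?_, ?_⟩
  · unfold Matrix.IsHermitian
    rw [Matrix.conjTranspose_mul, Matrix.conjTranspose_mul, Matrix.star_eq_conjTranspose,
      Matrix.conjTranspose_conjTranspose, hD, Matrix.diagonal_conjTranspose, ← mul_assoc]
    congr 3
    funext i
    simp
  · calc U * D * star U * (U * D * star U) = U * (D * (star U * U) * D) * star U := by
          simp only [mul_assoc]
      _ = U * Matrix.diagonal (RCLike.ofReal ∘ hA.1.eigenvalues) * star U := by
          rw [hU2, Matrix.mul_one, hD, Matrix.diagonal_mul_diagonal]
          congr 3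
          funext i
          simp [← Complex.ofReal_mul, Real.mul_self_sqrt (hA.eigenvalues_nonneg i)]
      _ = A := hA.1.spectral_theorem.symm

lemma psd_mulVec_eq_zero {n : Type*} [Fintype n] [DecidableEq n]
    {A : Matrix n n ℂ} (hA : A.PosSemidef) {v : n → ℂ}
    (h : dotProduct (star v) (A *ᵥ v) = 0) : A *ᵥ v = 0 := by
  obtain ⟨B, hBh, hB⟩ := psd_sqrt_exists hA
  have key : dotProduct (star (B *ᵥ v)) (B *ᵥ v) = 0 := by
    rw [Matrix.star_mulVec, hBh.eq]
    calc star v ᵥ* B ⬝ᵥ B *ᵥ v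
        = star v ⬝ᵥ B *ᵥ (B *ᵥ v) := (dotProduct_mulVec _ _ _).symm
      _ = star v ⬝ᵥ (B * B) *ᵥ v := by rw [Matrix.mulVec_mulVec]
      _ = 0 := by rw [hB]; exact h
  have hv : B *ᵥ v = 0 := dotProduct_star_self_eq_zero.mp key
  calc A *ᵥ v = (B * B) *ᵥ v := by rw [hB]
    _ = B *ᵥ (B *ᵥ v) := (Matrix.mulVec_mulVec _ _ _).symm
    _ = 0 := by rw [hv, Matrix.mulVec_zero]

section helpers2
variable {n : Type*} [Fintype n] [DecidableEq n]

lemma left_mul_eq_self_of_range {S Q : Matrix n n ℂ} (hQidem : Q * Q = Q)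
    (hrange : ∀ v, ∃ w, Q *ᵥ w = S *ᵥ v) : Q * S = S := by
  ext i j
  obtain ⟨w, hw⟩ := hrange (Pi.single j 1)
  have h1 : (Q * S) *ᵥ Pi.single j 1 = S *ᵥ Pi.single j 1 := by
    rw [← Matrix.mulVec_mulVec, ← hw, Matrix.mulVec_mulVec, hQidem, hw]
  have := congrFun h1 i
  simpa [Matrix.mulVec_single] using this

lemma trace_trick_main {S Q R : Matrix n n ℂ} (hS : S.IsHermitian) (hQ : Q.IsHermitian)
    (hQidem : Q * Q = Q) (hR : R.IsHermitian) (hRQ : R * Q = R)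
    (hRRS : R * R * S = Q) (hQS : Q * S = S) :
    R * S * R = Q ∧ R * S = S * R := by
  have hSQ : S * Q = S := by
    have := congrArg Matrix.conjTranspose hQS
    rwa [Matrix.conjTranspose_mul, hQ.eq, hS.eq] at this
  have hQR : Q * R = R := by
    have := congrArg Matrix.conjTranspose hRQ
    rwa [Matrix.conjTranspose_mul, hQ.eq, hR.eq] at this
  have hSRR : S * (R * R) = Q := by
    have := congrArg Matrix.conjTranspose hRRS
    rwa [Matrix.conjTranspose_mul, Matrix.conjTranspose_mul, hS.eq, hR.eq, hQ.eq] at this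
  -- part 1 : R * S * R = Q
  have hP2 : (R * S * R) * (R * S * R) = R * S * R := by
    calc (R * S * R) * (R * S * R) = R * S * (R * R * S) * R := by
          simp only [mul_assoc]
      _ = R * (S * Q) * R := by rw [hRRS]; simp only [mul_assoc]
      _ = R * S * R := by rw [hSQ]
  have hPQ : (R * S * R) * Q = R * S * R := by
    rw [mul_assoc, hRQ]
  have hQP : Q * (R * S * R) = R * S * R := by
    simp only [← mul_assoc, hQR]
  have htrP : (R * S * R).trace = Q.trace := by
    calc (R * S * R).trace = (R * (S * R)).trace := by rw [mul_assoc]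
      _ = ((S * R) * R).trace := Matrix.trace_mul_comm _ _
      _ = (S * (R * R)).trace := by rw [mul_assoc]
      _ = Q.trace := by rw [hSRR]
  have hPh : (R * S * R).IsHermitian := by
    unfold Matrix.IsHermitian
    rw [Matrix.conjTranspose_mul, Matrix.conjTranspose_mul, hS.eq, hR.eq, mul_assoc]
  set M := R * S * R - Q with hM
  have hMh : Mᴴ = M := by
    rw [hM, Matrix.conjTranspose_sub, hPh.eq, hQ.eq]
  have hMM : M * M = -M := by
    rw [hM]
    rw [Matrix.sub_mul, Matrix.mul_sub, Matrix.mul_sub, hP2, hPQ, hQP, hQidem]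
    abel
  have hM0 : M = 0 := by
    apply eq_zero_of_trace_mul_conjTranspose
    rw [hMh, hMM, Matrix.trace_neg, hM, Matrix.trace_sub, htrP, sub_self, neg_zero]
  have h1 : R * S * R = Q := by
    have := sub_eq_zero.mp hM0
    exact this
  refine ⟨h1, ?_⟩
  -- part 2 : R * S = S * R
  set N := R * S - S * R with hN
  have hNh : Nᴴ = -N := by
    rw [hN, Matrix.conjTranspose_sub, Matrix.conjTranspose_mul, Matrix.conjTranspose_mul,
      hS.eq, hR.eq]
    rw [neg_sub]
  have htr1 : (R * S * (R * S)).trace = S.trace := by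
    calc (R * S * (R * S)).trace = ((R * S * R) * S).trace := by simp only [mul_assoc]
      _ = (Q * S).trace := by rw [h1]
      _ = S.trace := by rw [hQS]
  have htr2 : (R * S * (S * R)).trace = S.trace := by
    calc (R * S * (S * R)).trace = (R * (S * (S * R))).trace := by simp only [mul_assoc]
      _ = ((S * (S * R)) * R).trace := Matrix.trace_mul_comm _ _
      _ = (S * (S * (R * R))).trace := by simp only [mul_assoc]
      _ = (S * Q).trace := by rw [hSRR]
      _ = S.trace := by rw [hSQ]
  have htr3 : (S * R * (R * S)).trace = S.trace := by
    calc (S * R * (R * S)).trace = (S * (R * R * S)).trace := by simp only [mul_assoc]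
      _ = (S * Q).trace := by rw [hRRS]
      _ = S.trace := by rw [hSQ]
  have htr4 : (S * R * (S * R)).trace = S.trace := by
    calc (S * R * (S * R)).trace = (S * (R * S * R)).trace := by simp only [mul_assoc]
      _ = (S * Q).trace := by rw [h1]
      _ = S.trace := by rw [hSQ]
  have hN0 : N = 0 := by
    apply eq_zero_of_trace_mul_conjTranspose
    rw [hNh]
    have : N * -N = -(N * N) := by rw [mul_neg]
    rw [this, Matrix.trace_neg, neg_eq_zero, hN]
    rw [Matrix.sub_mul, Matrix.mul_sub, Matrix.mul_sub, Matrix.trace_sub, Matrix.trace_sub,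
      Matrix.trace_sub, htr1, htr2, htr3, htr4]
    abel
  exact sub_eq_zero.mp hN0

lemma ker_subset_of_range {S Q : Matrix n n ℂ} (hSpsd : S.PosSemidef) (hQ : Q.IsHermitian)
    (hrange : ∀ v, ∃ w, Q *ᵥ w = S *ᵥ v) :
    ∀ v, Q *ᵥ v = 0 → S *ᵥ v = 0 := by
  intro v hv
  obtain ⟨w, hw⟩ := hrange v
  have hstar : star v ᵥ* Q = 0 := by
    have h1 : star (Q *ᵥ v) = star v ᵥ* Qᴴ := Matrix.star_mulVec _ _
    rw [hv, hQ.eq] at h1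
    simpa using h1.symm
  have hdot : dotProduct (star v) (S *ᵥ v) = 0 := by
    rw [← hw, dotProduct_mulVec, hstar, zero_dotProduct]
  exact psd_mulVec_eq_zero hSpsd hdot

lemma supported_of_le {S Q : Matrix n n ℂ} (hSpsd : S.PosSemidef) (hQ : Q.IsHermitian)
    (hQidem : Q * Q = Q) (hrange : ∀ v, ∃ w, Q *ᵥ w = S *ᵥ v)
    {ψ : Matrix n n ℂ} (hψ : ψ.PosSemidef) (hle : (S - ψ).PosSemidef) :
    ψ * Q = ψ ∧ Q * ψ = ψ := by
  have hker : ∀ v, Q *ᵥ v = 0 → ψ *ᵥ v = 0 := by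
    intro v hv
    have hSv : S *ᵥ v = 0 := ker_subset_of_range hSpsd hQ hrange v hv
    have h1 : 0 ≤ dotProduct (star v) (ψ *ᵥ v) := hψ.dotProduct_mulVec_nonneg v
    have h2 : 0 ≤ dotProduct (star v) ((S - ψ) *ᵥ v) := hle.dotProduct_mulVec_nonneg v
    have h3 : dotProduct (star v) ((S - ψ) *ᵥ v)
        = - dotProduct (star v) (ψ *ᵥ v) := by
      rw [Matrix.sub_mulVec, dotProduct_sub, hSv, dotProduct_zero, zero_sub]
    rw [h3, le_neg, neg_zero] at h2
    exact psd_mulVec_eq_zero hψ (le_antisymm h2 h1)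
  have hψQ : ψ * Q = ψ := by
    have hz : ψ * (1 - Q) = 0 := by
      ext i j
      have hQv : Q *ᵥ (fun k => (1 - Q) k j) = 0 := by
        funext i'
        have : (Q * (1 - Q)) i' j = 0 := by
          rw [Matrix.mul_sub, Matrix.mul_one, hQidem, sub_self, Matrix.zero_apply]
        simpa [Matrix.mulVec, Matrix.mul_apply, dotProduct] using this
      have := congrFun (hker _ hQv) i
      simpa [Matrix.mulVec, Matrix.mul_apply, dotProduct] using this
    have := hz
    rw [Matrix.mul_sub, Matrix.mul_one, sub_eq_zero] at this
    exact this.symm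
  refine ⟨hψQ, ?_⟩
  have := congrArg Matrix.conjTranspose hψQ
  rwa [Matrix.conjTranspose_mul, hQ.eq, hψ.isHermitian.eq] at this

end helpers2

section helpers3
variable {n : Type*} [Fintype n] [DecidableEq n]

lemma diagonal_const_eq_smul_one (a : ℂ) :
    Matrix.diagonal (fun _ : n => a) = a • (1 : Matrix n n ℂ) := by
  ext i j
  by_cases h : i = j <;> simp [Matrix.diagonal_apply, Matrix.one_apply, h]

lemma aeval_conj_diag (U V : Matrix n n ℂ) (hUV : U * V = 1) (hVU : V * U = 1)
    (d : n → ℂ) (p : Polynomial ℂ) :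
    Polynomial.aeval (U * Matrix.diagonal d * V) p
      = U * Matrix.diagonal (fun i => p.eval (d i)) * V := by
  induction p using Polynomial.induction_on with
  | C a =>
    simp only [Polynomial.aeval_C, Polynomial.eval_C]
    rw [diagonal_const_eq_smul_one, Algebra.algebraMap_eq_smul_one,
      Matrix.mul_smul, Matrix.smul_mul, Matrix.mul_one, hUV]
  | add p q hp hq =>
    simp only [map_add, hp, hq, Polynomial.eval_add]
    rw [← Matrix.diagonal_add, Matrix.mul_add, Matrix.add_mul]
  | monomial k a ih =>
    have hsplit : Polynomial.C a * Polynomial.X ^ (k + 1)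
        = (Polynomial.C a * Polynomial.X ^ k) * Polynomial.X := by ring
    rw [hsplit, _root_.map_mul, Polynomial.aeval_X, ih]
    calc U * Matrix.diagonal (fun i => Polynomial.eval (d i) (Polynomial.C a * Polynomial.X ^ k))
          * V * (U * Matrix.diagonal d * V)
        = U * Matrix.diagonal (fun i => Polynomial.eval (d i) (Polynomial.C a * Polynomial.X ^ k))
          * (V * U) * Matrix.diagonal d * V := by simp only [mul_assoc]
      _ = U * (Matrix.diagonal (fun i => Polynomial.eval (d i) (Polynomial.C a * Polynomial.X ^ k))
          * Matrix.diagonal d) * V := by rw [hVU]; simp only [mul_assoc, Matrix.mul_one]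
      _ = U * Matrix.diagonal (fun i =>
            Polynomial.eval (d i) (Polynomial.C a * Polynomial.X ^ k * Polynomial.X)) * V := by
          rw [Matrix.diagonal_mul_diagonal]
          congr 1
          · congr 1
            funext i
            simp [Polynomial.eval_mul]

lemma aeval_transpose (A : Matrix n n ℂ) (p : Polynomial ℂ) :
    (Polynomial.aeval A p)ᵀ = Polynomial.aeval Aᵀ p := by
  rw [Polynomial.aeval_eq_sum_range, Polynomial.aeval_eq_sum_range]
  rw [Matrix.transpose_sum]
  congr 1
  funext i
  rw [Matrix.transpose_smul, Matrix.transpose_pow]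

lemma aeval_mem_starSubalgebra {S : StarSubalgebra ℂ (Matrix n n ℂ)}
    {x : Matrix n n ℂ} (hx : x ∈ S) (p : Polynomial ℂ) : Polynomial.aeval x p ∈ S := by
  rw [Polynomial.aeval_eq_sum_range]
  exact sum_mem fun i _ => SMulMemClass.smul_mem _ (pow_mem hx i)

lemma diagonal_sum_comm {ι : Type*} (t : Finset ι) (f : ι → n → ℂ) :
    ∑ γ ∈ t, Matrix.diagonal (f γ) = Matrix.diagonal (fun i => ∑ γ ∈ t, f γ i) := by
  ext i j
  by_cases h : i = j
  · subst h; simp [Matrix.sum_apply, Matrix.diagonal_apply]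
  · simp [Matrix.sum_apply, Matrix.diagonal_apply, h]

lemma spectral_pvm {d : ℕ} {A : Matrix (Fin d) (Fin d) ℂ} (hA : A.IsHermitian) :
    ∃ (P : {t : ℝ // t ∈ Finset.image hA.eigenvalues Finset.univ}
        → Matrix (Fin d) (Fin d) ℂ),
      (∀ γ, ∃ p : Polynomial ℂ, P γ = Polynomial.aeval A p) ∧
      (∀ γ, (P γ).IsHermitian) ∧
      (∀ γ, P γ * P γ = P γ) ∧
      (∀ γ δ, γ ≠ δ → P γ * P δ = 0) ∧
      (∑ γ, P γ) = 1 ∧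
      A = ∑ γ, ((γ.1 : ℝ) : ℂ) • P γ := by
  classical
  set s := Finset.image hA.eigenvalues Finset.univ with hs
  set U : Matrix (Fin d) (Fin d) ℂ := (hA.eigenvectorUnitary : Matrix (Fin d) (Fin d) ℂ)
    with hU
  have hU1 : U * star U = 1 := (Matrix.mem_unitaryGroup_iff).mp (hA.eigenvectorUnitary).2
  have hU2 : star U * U = 1 := (Matrix.mem_unitaryGroup_iff').mp (hA.eigenvectorUnitary).2
  set P : {t : ℝ // t ∈ s} → Matrix (Fin d) (Fin d) ℂ := fun γ =>
    U * Matrix.diagonal (fun i => if hA.eigenvalues i = (γ : ℝ) then (1:ℂ) else 0) * star U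
    with hP
  have hmulP : ∀ (f g : Fin d → ℂ),
      (U * Matrix.diagonal f * star U) * (U * Matrix.diagonal g * star U)
        = U * Matrix.diagonal (fun i => f i * g i) * star U := by
    intro f g
    calc (U * Matrix.diagonal f * star U) * (U * Matrix.diagonal g * star U)
        = U * Matrix.diagonal f * (star U * U) * Matrix.diagonal g * star U := by
          simp only [mul_assoc]
      _ = U * (Matrix.diagonal f * Matrix.diagonal g) * star U := by
          rw [hU2]; simp only [mul_assoc, Matrix.mul_one]
      _ = U * Matrix.diagonal (fun i => f i * g i) * star U := by
          rw [Matrix.diagonal_mul_diagonal]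
  refine ⟨P, ?_, ?_, ?_, ?_, ?_, ?_⟩
  · -- polynomial
    intro γ
    set p : Polynomial ℂ := (Lagrange.interpolate s (fun t : ℝ => (t : ℂ)))
      (fun t => if t = (γ : ℝ) then 1 else 0) with hp
    refine ⟨p, ?_⟩
    have hinj : Set.InjOn (fun t : ℝ => (t : ℂ)) s := fun a _ b _ h =>
      Complex.ofReal_injective h
    have hdiag := aeval_conj_diag U (star U) hU1 hU2 (RCLike.ofReal ∘ hA.eigenvalues) p
    rw [show U * diagonal (RCLike.ofReal ∘ hA.eigenvalues) * star U = A from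
      hA.spectral_theorem.symm] at hdiag
    have hfun : (fun i => Polynomial.eval ((RCLike.ofReal ∘ hA.eigenvalues) i) p)
        = (fun i => if hA.eigenvalues i = (γ : ℝ) then (1:ℂ) else 0) := by
      funext i
      have hi : hA.eigenvalues i ∈ s := Finset.mem_image_of_mem _ (Finset.mem_univ i)
      have hnode := Lagrange.eval_interpolate_at_node
        (fun t => if t = (γ : ℝ) then (1:ℂ) else 0) hinj hi
      exact hnode
    rw [hfun] at hdiag
    rw [hP]
    exact hdiag.symm
  · -- hermitian
    intro γ
    unfold Matrix.IsHermitian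
    rw [hP]
    simp only [Matrix.conjTranspose_mul, Matrix.star_eq_conjTranspose,
      Matrix.conjTranspose_conjTranspose, Matrix.diagonal_conjTranspose]
    have hstar : (star fun i => if hA.eigenvalues i = (γ : ℝ) then (1:ℂ) else 0)
        = (fun i => if hA.eigenvalues i = (γ : ℝ) then (1:ℂ) else 0) := by
      funext i
      by_cases h : hA.eigenvalues i = (γ : ℝ) <;> simp [h]
    rw [hstar, ← mul_assoc]
  · -- idempotent
    intro γ
    rw [hP, hmulP]
    have : (fun i => (if hA.eigenvalues i = (γ : ℝ) then (1:ℂ) else 0)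
        * (if hA.eigenvalues i = (γ : ℝ) then (1:ℂ) else 0))
        = (fun i => if hA.eigenvalues i = (γ : ℝ) then (1:ℂ) else 0) := by
      funext i
      by_cases h : hA.eigenvalues i = (γ : ℝ) <;> simp [h]
    rw [this]
  · -- orthogonal
    intro γ δ hne
    rw [hP, hmulP]
    have hd : ((γ : ℝ)) ≠ ((δ : ℝ)) := fun hh => hne (Subtype.ext hh)
    have : (fun i => (if hA.eigenvalues i = (γ : ℝ) then (1:ℂ) else 0)
        * (if hA.eigenvalues i = (δ : ℝ) then (1:ℂ) else 0)) = fun _ => 0 := by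
      funext i
      by_cases h1 : hA.eigenvalues i = (γ : ℝ)
      · have h2 : hA.eigenvalues i ≠ (δ : ℝ) := fun hh => hd (h1.symm.trans hh)
        simp [h1, h2, hd]
      · simp [h1]
    rw [this, Matrix.diagonal_zero, Matrix.mul_zero, Matrix.zero_mul]
  · -- sum to one
    have hsum : ∑ γ : {t : ℝ // t ∈ s}, P γ
        = U * Matrix.diagonal (fun i => ∑ γ : {t : ℝ // t ∈ s},
            (if hA.eigenvalues i = (γ : ℝ) then (1:ℂ) else 0)) * star U := by
      rw [hP]
      simp only [← Finset.sum_mul, ← Finset.mul_sum]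
      rw [diagonal_sum_comm]
    rw [hsum]
    have : (fun i => ∑ γ : {t : ℝ // t ∈ s},
        (if hA.eigenvalues i = (γ : ℝ) then (1:ℂ) else 0)) = fun _ => 1 := by
      funext i
      rw [Finset.sum_coe_sort s (fun t => if hA.eigenvalues i = t then (1:ℂ) else 0)]
      rw [Finset.sum_ite_eq s (hA.eigenvalues i) (fun _ => (1:ℂ))]
      simp [hs, Finset.mem_image_of_mem _ (Finset.mem_univ i)]
    rw [this]
    rw [show Matrix.diagonal (fun _ : Fin d => (1:ℂ)) = 1 from Matrix.diagonal_one]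
    rw [Matrix.mul_one, hU1]
  · -- A = sum
    have hsmul : ∀ γ : {t : ℝ // t ∈ s}, ((γ.1 : ℝ) : ℂ) • P γ
        = U * Matrix.diagonal (fun i => ((γ.1 : ℝ) : ℂ)
            * (if hA.eigenvalues i = (γ : ℝ) then (1:ℂ) else 0)) * star U := by
      intro γ
      rw [hP]
      rw [show (fun i => ((γ.1 : ℝ) : ℂ) * (if hA.eigenvalues i = (γ : ℝ) then (1:ℂ) else 0))
        = ((γ.1 : ℝ) : ℂ) • (fun i => if hA.eigenvalues i = (γ : ℝ) then (1:ℂ) else 0)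
        from rfl]
      rw [Matrix.diagonal_smul, Matrix.mul_smul, Matrix.smul_mul]
    have hsum : ∑ γ : {t : ℝ // t ∈ s}, ((γ.1 : ℝ) : ℂ) • P γ
        = U * Matrix.diagonal (fun i => ∑ γ : {t : ℝ // t ∈ s},
            ((γ.1 : ℝ) : ℂ) * (if hA.eigenvalues i = (γ : ℝ) then (1:ℂ) else 0)) * star U := by
      rw [Finset.sum_congr rfl (fun γ _ => hsmul γ)]
      simp only [← Finset.sum_mul, ← Finset.mul_sum]
      rw [diagonal_sum_comm]
    rw [hsum]
    have : (fun i => ∑ γ : {t : ℝ // t ∈ s},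
        ((γ.1 : ℝ) : ℂ) * (if hA.eigenvalues i = (γ : ℝ) then (1:ℂ) else 0))
        = fun i => ((hA.eigenvalues i : ℝ) : ℂ) := by
      funext i
      rw [Finset.sum_coe_sort s
        (fun t => ((t:ℝ):ℂ) * (if hA.eigenvalues i = t then (1:ℂ) else 0))]
      have hc : ∀ t ∈ s, ((t:ℝ):ℂ) * (if hA.eigenvalues i = t then (1:ℂ) else 0)
          = if hA.eigenvalues i = t then ((t:ℝ):ℂ) else 0 := by
        intro t _
        by_cases h : hA.eigenvalues i = t <;> simp [h]
      rw [Finset.sum_congr rfl hc]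
      rw [Finset.sum_ite_eq s (hA.eigenvalues i) (fun t => ((t:ℝ):ℂ))]
      simp [hs, Finset.mem_image_of_mem _ (Finset.mem_univ i)]
    rw [this]
    exact hA.spectral_theorem

end helpers3

lemma kraus_rep {dA dB : ℕ} (ρ : Matrix (Fin dA × Fin dB) (Fin dA × Fin dB) ℂ)
    (C : Matrix (Fin dA × Fin dB) (Fin dA × Fin dB) ℂ) (hCC : C * Cᴴ = ρ)
    (A : Matrix (Fin dA) (Fin dA) ℂ) :
    ptraceA ((A ⊗ₖ (1 : Matrix (Fin dB) (Fin dB) ℂ)) * ρ)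
      = ∑ m, (Matrix.of (fun b i => C (i, b) m) : Matrix (Fin dB) (Fin dA) ℂ) * Aᵀ
          * (Matrix.of (fun b i => C (i, b) m) : Matrix (Fin dB) (Fin dA) ℂ)ᴴ := by
  ext b b'
  have hL : ptraceA ((A ⊗ₖ (1 : Matrix (Fin dB) (Fin dB) ℂ)) * ρ) b b'
      = ∑ i, ∑ k, A i k * ρ (k, b) (i, b') := by
    simp only [ptraceA, Matrix.of_apply, Matrix.mul_apply, Fintype.sum_prod_type,
      kroneckerMap_apply, Matrix.one_apply, mul_ite, mul_one, mul_zero, ite_mul, zero_mul]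
    congr 1
    funext i
    congr 1
    funext k
    rw [Finset.sum_ite_eq Finset.univ b (fun c => A i k * ρ (k, c) (i, b'))]
    simp
  rw [hL]
  rw [Matrix.sum_apply]
  have hR : ∀ m, ((Matrix.of (fun b i => C (i, b) m) : Matrix (Fin dB) (Fin dA) ℂ) * Aᵀ
      * (Matrix.of (fun b i => C (i, b) m) : Matrix (Fin dB) (Fin dA) ℂ)ᴴ) b b'
      = ∑ i, ∑ k, C (k, b) m * A i k * star (C (i, b') m) := by
    intro m
    simp only [Matrix.mul_apply, Matrix.conjTranspose_apply, Matrix.of_apply,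
      Matrix.transpose_apply, Finset.sum_mul, Finset.mul_sum]
  simp only [hR]
  conv_rhs => rw [Finset.sum_comm]
  congr 1
  funext i
  conv_rhs => rw [Finset.sum_comm]
  congr 1
  funext k
  rw [← hCC]
  simp only [Matrix.mul_apply, Matrix.conjTranspose_apply]
  rw [Finset.mul_sum]
  congr 1
  funext m
  ring


lemma posSemidef_sum {ι : Type*} [Fintype ι] {n : Type*} [Fintype n] (f : ι → Matrix n n ℂ)
    (h : ∀ i, (f i).PosSemidef) : (∑ i, f i).PosSemidef := by
  classical
  exact Finset.sum_induction f Matrix.PosSemidef (fun a b ha hb => ha.add hb)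
    Matrix.PosSemidef.zero (fun i _ => h i)

lemma posSemidef_of_herm_idem {n : Type*} [Fintype n] {E : Matrix n n ℂ}
    (hh : E.IsHermitian) (hi : E * E = E) : E.PosSemidef := by
  have : E = Eᴴ * E := by rw [hh.eq, hi]
  rw [this]
  exact Matrix.posSemidef_conjTranspose_mul_self E

/-- `ρ` is an `𝒜`-ZUS iff `φ(X) = ρ_B^{-1/2} Tr_A[(Xᵀ ⊗ I)ρ] ρ_B^{-1/2}`,
restricted to `𝒜ᵀ`, is a unital *-homomorphism into `B(S)` whose image
commutes with `ρ_B`.  Here `Q` is the support projection of `ρ_B` and `R` is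
the inverse square root of `ρ_B` on its support. -/
theorem stmt16 {dA dB : ℕ}
    (𝒜 : StarSubalgebra ℂ (Matrix (Fin dA) (Fin dA) ℂ))
    (ρ : Matrix (Fin dA × Fin dB) (Fin dA × Fin dB) ℂ)
    (hρ : ρ.PosSemidef) (htr : ρ.trace = 1)
    (Q R : Matrix (Fin dB) (Fin dB) ℂ)
    (hQherm : Q.IsHermitian) (hQidem : Q * Q = Q)
    (hQsupp : LinearMap.range Q.mulVecLin = LinearMap.range (ptraceA ρ).mulVecLin)
    (hR : R.PosSemidef) (hRQ : R * Q = R) (hRinv : R * R * ptraceA ρ = Q)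
    (φ : Matrix (Fin dA) (Fin dA) ℂ → Matrix (Fin dB) (Fin dB) ℂ)
    (hφ : ∀ X, φ X = R * ptraceA ((Xᵀ ⊗ₖ (1 : Matrix (Fin dB) (Fin dB) ℂ)) * ρ) * R) :
    (∀ (ι : Type) [Fintype ι] [DecidableEq ι] (E : ι → Matrix (Fin dA) (Fin dA) ℂ),
        (∀ α, E α ∈ 𝒜) → (∀ α, (E α).IsHermitian) → (∀ α, E α * E α = E α) →
        (∀ α β, α ≠ β → E α * E β = 0) → (∑ α, E α) = 1 →
        ∀ α β, α ≠ β →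
          ptraceA ((E α ⊗ₖ (1 : Matrix (Fin dB) (Fin dB) ℂ)) * ρ) *
            ptraceA ((E β ⊗ₖ (1 : Matrix (Fin dB) (Fin dB) ℂ)) * ρ) = 0)
    ↔
    (φ 1 = Q ∧
     (∀ X Y, Xᵀ ∈ 𝒜 → Yᵀ ∈ 𝒜 → φ (X * Y) = φ X * φ Y) ∧
     (∀ X, Xᵀ ∈ 𝒜 → φ (star X) = star (φ X)) ∧
     (∀ X, Xᵀ ∈ 𝒜 → φ X * ptraceA ρ = ptraceA ρ * φ X)) := by
  classical
  set σ : Matrix (Fin dB) (Fin dB) ℂ := ptraceA ρ with hσdef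
  obtain ⟨C, hCh, hCC0⟩ := psd_sqrt_exists hρ
  have hCC : C * Cᴴ = ρ := by
    rw [hCh.eq, hCC0]
  set J : (Fin dA × Fin dB) → Matrix (Fin dB) (Fin dA) ℂ :=
    fun m => Matrix.of (fun b i => C (i, b) m) with hJdef
  have hKraus : ∀ A : Matrix (Fin dA) (Fin dA) ℂ,
      ptraceA ((A ⊗ₖ (1 : Matrix (Fin dB) (Fin dB) ℂ)) * ρ)
        = ∑ m, J m * Aᵀ * (J m)ᴴ := fun A => kraus_rep ρ C hCC A
  set K : (Fin dA × Fin dB) → Matrix (Fin dB) (Fin dA) ℂ := fun m => R * J m with hKdef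
  have hRherm := hR.isHermitian
  have hφK : ∀ X, φ X = ∑ m, K m * X * (K m)ᴴ := by
    intro X
    rw [hφ, hKraus, Matrix.transpose_transpose, Finset.mul_sum, Finset.sum_mul]
    refine Finset.sum_congr rfl fun m _ => ?_
    simp only [hKdef, Matrix.conjTranspose_mul, hRherm.eq]
    simp only [Matrix.mul_assoc]
  have hσKraus : σ = ∑ m, J m * (J m)ᴴ := by
    have h1 := hKraus 1
    rw [Matrix.one_kronecker_one, Matrix.one_mul, Matrix.transpose_one] at h1
    simpa [Matrix.mul_one] using h1
  have hσpsd : σ.PosSemidef := by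
    rw [hσKraus]
    exact _root_.posSemidef_sum _ fun m => by
      simpa using Matrix.posSemidef_conjTranspose_mul_self ((J m)ᴴ)
  have hσherm := hσpsd.isHermitian
  have hrange : ∀ v, ∃ w, Q *ᵥ w = σ *ᵥ v := by
    intro v
    have hv : σ *ᵥ v ∈ LinearMap.range σ.mulVecLin := ⟨v, by simp [Matrix.mulVecLin_apply]⟩
    rw [← hQsupp] at hv
    obtain ⟨w, hw⟩ := hv
    exact ⟨w, by simpa [Matrix.mulVecLin_apply] using hw⟩
  have hQσ : Q * σ = σ := left_mul_eq_self_of_range hQidem hrange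
  have hσQ : σ * Q = σ := by
    have := congrArg Matrix.conjTranspose hQσ
    rwa [Matrix.conjTranspose_mul, hQherm.eq, hσherm.eq] at this
  obtain ⟨hRσR, hRσ⟩ := trace_trick_main hσherm hQherm hQidem hRherm hRQ hRinv hQσ
  have hQR : Q * R = R := by
    have := congrArg Matrix.conjTranspose hRQ
    rwa [Matrix.conjTranspose_mul, hQherm.eq, hRherm.eq] at this
  have hσRR : σ * (R * R) = Q := by
    have := congrArg Matrix.conjTranspose hRinv
    rwa [Matrix.conjTranspose_mul, Matrix.conjTranspose_mul, hσherm.eq, hRherm.eq,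
      hQherm.eq] at this
  have hφ1 : φ 1 = Q := by
    rw [hφ, Matrix.transpose_one, Matrix.one_kronecker_one, Matrix.one_mul]
    exact hRσR
  have hKQ : ∀ m, Q * K m = K m := by
    intro m
    simp only [hKdef]
    rw [← Matrix.mul_assoc, hQR]
  have hKQ' : ∀ m, (K m)ᴴ * Q = (K m)ᴴ := by
    intro m
    have := congrArg Matrix.conjTranspose (hKQ m)
    rwa [Matrix.conjTranspose_mul, hQherm.eq] at this
  have hφQr : ∀ X, φ X * Q = φ X := by
    intro X
    rw [hφK, Finset.sum_mul]
    refine Finset.sum_congr rfl fun m _ => ?_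
    rw [Matrix.mul_assoc, hKQ' m]
  have hφadd : ∀ X Y, φ (X + Y) = φ X + φ Y := by
    intro X Y
    simp only [hφK, Matrix.add_mul, Matrix.mul_add, Finset.sum_add_distrib]
  have hφsmul : ∀ (c : ℂ) X, φ (c • X) = c • φ X := by
    intro c X
    simp only [hφK, Matrix.mul_smul, Matrix.smul_mul, ← Finset.smul_sum]
  have hφstar : ∀ X, φ Xᴴ = (φ X)ᴴ := by
    intro X
    rw [hφK Xᴴ, hφK X, Matrix.conjTranspose_sum]
    refine Finset.sum_congr rfl fun m _ => ?_
    simp only [Matrix.conjTranspose_mul, Matrix.conjTranspose_conjTranspose, Matrix.mul_assoc]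
  have hφfin : ∀ {κ : Type} [Fintype κ] (f : κ → Matrix (Fin dA) (Fin dA) ℂ),
      φ (∑ x, f x) = ∑ x, φ (f x) := by
    intro κ _ f
    simp only [hφK, Matrix.mul_sum, Matrix.sum_mul]
    rw [Finset.sum_comm]
  have hsupp : ∀ {ψ : Matrix (Fin dB) (Fin dB) ℂ}, ψ.PosSemidef → (σ - ψ).PosSemidef →
      ψ * Q = ψ ∧ Q * ψ = ψ :=
    fun hψ hle => supported_of_le hσpsd hQherm hQidem hrange hψ hle
  have hpsd_mid : ∀ (B : Matrix (Fin dA) (Fin dA) ℂ), B.PosSemidef →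
      (∑ m, J m * B * (J m)ᴴ).PosSemidef :=
    fun B hB => _root_.posSemidef_sum _ fun m => hB.mul_mul_conjTranspose_same (J m)
  constructor
  · -- forward : ZUS → homomorphism
    intro hZUS
    have hmaster : ∀ X : Matrix (Fin dA) (Fin dA) ℂ, Xᵀ ∈ 𝒜 → X.IsHermitian →
        ((∀ m, K m * X = φ X * K m) ∧ φ X * σ = σ * φ X) := by
      intro X hXmem hXherm
      obtain ⟨P, hpoly, hPherm, hPidem, hPorth, hPsum, hXsum⟩ := spectral_pvm hXherm
      set E := fun γ => (P γ)ᵀ with hEdef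
      have hEmem : ∀ γ, E γ ∈ 𝒜 := by
        intro γ
        obtain ⟨p, hp⟩ := hpoly γ
        show (P γ)ᵀ ∈ 𝒜
        rw [hp, aeval_transpose]
        exact aeval_mem_starSubalgebra hXmem p
      have hEherm : ∀ γ, (E γ).IsHermitian := fun γ => (hPherm γ).transpose
      have hEidem : ∀ γ, E γ * E γ = E γ := by
        intro γ
        show (P γ)ᵀ * (P γ)ᵀ = (P γ)ᵀ
        rw [← Matrix.transpose_mul, hPidem]
      have hEorth : ∀ γ δ, γ ≠ δ → E γ * E δ = 0 := by
        intro γ δ h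
        show (P γ)ᵀ * (P δ)ᵀ = 0
        rw [← Matrix.transpose_mul, hPorth δ γ (Ne.symm h), Matrix.transpose_zero]
      have hEsum : (∑ γ, E γ) = 1 := by
        show (∑ γ, (P γ)ᵀ) = 1
        rw [← Matrix.transpose_sum, hPsum, Matrix.transpose_one]
      set Ψ := fun γ => ptraceA ((E γ ⊗ₖ (1 : Matrix (Fin dB) (Fin dB) ℂ)) * ρ) with hΨdef
      have hZ : ∀ γ δ, γ ≠ δ → Ψ γ * Ψ δ = 0 :=
        hZUS _ E hEmem hEherm hEidem hEorth hEsum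
      have hΨK : ∀ γ, Ψ γ = ∑ m, J m * P γ * (J m)ᴴ := by
        intro γ
        show ptraceA (((P γ)ᵀ ⊗ₖ (1 : Matrix (Fin dB) (Fin dB) ℂ)) * ρ) = _
        rw [hKraus, Matrix.transpose_transpose]
      have hΨpsd : ∀ γ, (Ψ γ).PosSemidef := fun γ => by
        rw [hΨK]
        exact hpsd_mid _ (posSemidef_of_herm_idem (hPherm γ) (hPidem γ))
      have hΨherm : ∀ γ, (Ψ γ).IsHermitian := fun γ => (hΨpsd γ).isHermitian
      have hΨsum : ∑ γ, Ψ γ = σ := by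
        simp only [hΨK]
        rw [Finset.sum_comm, hσKraus]
        refine Finset.sum_congr rfl fun m _ => ?_
        rw [← Matrix.sum_mul, ← Matrix.mul_sum, hPsum, Matrix.mul_one]
      have hΨle : ∀ γ, (σ - Ψ γ).PosSemidef := by
        intro γ
        have h1 : σ - Ψ γ = ∑ m, J m * (1 - P γ) * (J m)ᴴ := by
          rw [hσKraus, hΨK γ, ← Finset.sum_sub_distrib]
          refine Finset.sum_congr rfl fun m _ => ?_
          rw [Matrix.mul_sub, Matrix.sub_mul, Matrix.mul_one]
        rw [h1]
        refine hpsd_mid _ (posSemidef_of_herm_idem ((Matrix.isHermitian_one).sub (hPherm γ)) ?_)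
        have hexp : ((1 : Matrix (Fin dA) (Fin dA) ℂ) - P γ) * (1 - P γ)
            = 1 - P γ - P γ + P γ * P γ := by noncomm_ring
        rw [hexp, hPidem]
        abel
      have hΨsupp := fun γ => hsupp (hΨpsd γ) (hΨle γ)
      have hΨσ : ∀ γ, Ψ γ * σ = Ψ γ * Ψ γ := by
        intro γ
        rw [← hΨsum, Matrix.mul_sum]
        rw [Finset.sum_eq_single γ]
        · intro δ _ hδ
          exact hZ γ δ (Ne.symm hδ)
        · intro h
          exact absurd (Finset.mem_univ γ) h
      have hΨσcomm : ∀ γ, σ * Ψ γ = Ψ γ * σ := by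
        intro γ
        have h := congrArg Matrix.conjTranspose (hΨσ γ)
        rw [Matrix.conjTranspose_mul, Matrix.conjTranspose_mul, hσherm.eq, (hΨherm γ).eq] at h
        rw [h, hΨσ γ]
      have hΨR2 : ∀ γ, Ψ γ * (R * R) = (R * R) * Ψ γ := by
        intro γ
        set M := Ψ γ * (R * R) - (R * R) * Ψ γ with hM
        have hMQ : Q * M * Q = M := by
          rw [hM, Matrix.mul_sub, Matrix.sub_mul]
          have t1 : Q * (Ψ γ * (R * R)) * Q = Ψ γ * (R * R) := by
            rw [← mul_assoc, (hΨsupp γ).2, mul_assoc, mul_assoc, hRQ]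
          have t2 : Q * ((R * R) * Ψ γ) * Q = (R * R) * Ψ γ := by
            rw [← mul_assoc, ← mul_assoc, hQR, mul_assoc, (hΨsupp γ).1]
          rw [t1, t2]
        have hσMσ : σ * M * σ = 0 := by
          rw [hM, Matrix.mul_sub, Matrix.sub_mul]
          have tA : σ * (Ψ γ * (R * R)) * σ = Ψ γ * σ := by
            rw [← mul_assoc, hΨσcomm γ, mul_assoc (Ψ γ) σ (R*R), hσRR, (hΨsupp γ).1]
          have tB : σ * ((R * R) * Ψ γ) * σ = Ψ γ * σ := by
            rw [← mul_assoc, hσRR, (hΨsupp γ).2]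
          rw [tA, tB, sub_self]
        have hM0 : M = 0 := by
          calc M = Q * M * Q := hMQ.symm
            _ = ((R * R) * σ) * M * (σ * (R * R)) := by rw [hRinv, hσRR]
            _ = (R * R) * (σ * M * σ) * (R * R) := by simp only [mul_assoc]
            _ = 0 := by rw [hσMσ, Matrix.mul_zero, Matrix.zero_mul]
        have := sub_eq_zero.mp hM0
        exact this
      have hφP : ∀ γ, φ (P γ) = R * Ψ γ * R := fun γ => hφ (P γ)
      have hφPP0 : ∀ γ δ, γ ≠ δ → φ (P γ) * φ (P δ) = 0 := by
        intro γ δ h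
        rw [hφP γ, hφP δ]
        calc (R * Ψ γ * R) * (R * Ψ δ * R)
            = R * (Ψ γ * (R * R) * Ψ δ) * R := by simp only [mul_assoc]
          _ = R * ((R * R) * Ψ γ * Ψ δ) * R := by rw [hΨR2 γ]
          _ = 0 := by rw [mul_assoc ((R*R)) (Ψ γ) (Ψ δ), hZ γ δ h, Matrix.mul_zero,
                Matrix.mul_zero, Matrix.zero_mul]
      have hφPP1 : ∀ γ, φ (P γ) * φ (P γ) = φ (P γ) := by
        intro γ
        have hQΨ : (R * R) * (σ * Ψ γ) = Ψ γ := by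
          rw [← mul_assoc, hRinv, (hΨsupp γ).2]
        rw [hφP γ]
        calc (R * Ψ γ * R) * (R * Ψ γ * R)
            = R * (Ψ γ * (R * R) * Ψ γ) * R := by simp only [mul_assoc]
          _ = R * ((R * R) * Ψ γ * Ψ γ) * R := by rw [hΨR2 γ]
          _ = R * ((R * R) * (Ψ γ * σ)) * R := by rw [mul_assoc ((R*R)) (Ψ γ) (Ψ γ), ← hΨσ γ]
          _ = R * ((R * R) * (σ * Ψ γ)) * R := by rw [hΨσcomm γ]
          _ = R * Ψ γ * R := by rw [hQΨ]
      -- φ X as a sum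
      have hφX : φ X = ∑ γ, ((γ.1 : ℝ) : ℂ) • φ (P γ) := by
        conv_lhs => rw [hXsum]
        rw [hφfin (fun γ => ((γ.1 : ℝ) : ℂ) • P γ)]
        exact Finset.sum_congr rfl fun γ _ => hφsmul _ _
      have hX2 : X * X = ∑ γ, ((((γ.1 : ℝ) : ℂ)) * (((γ.1 : ℝ) : ℂ))) • P γ := by
        have hXX' : X * X = (∑ γ, ((γ.1 : ℝ) : ℂ) • P γ) * (∑ γ, ((γ.1 : ℝ) : ℂ) • P γ) := by
          rw [← hXsum]
        rw [hXX', Finset.sum_mul_sum]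
        refine Finset.sum_congr rfl fun γ _ => ?_
        refine (Finset.sum_eq_single_of_mem γ (Finset.mem_univ γ) ?_).trans ?_
        · intro δ _ hδ
          rw [Matrix.smul_mul, Matrix.mul_smul, hPorth γ δ (Ne.symm hδ), smul_zero, smul_zero]
        · rw [Matrix.smul_mul, Matrix.mul_smul, smul_smul, hPidem]
      have hφXX : φ (X * X) = φ X * φ X := by
        rw [hX2, hφfin (fun γ => ((((γ.1 : ℝ) : ℂ)) * (((γ.1 : ℝ) : ℂ))) • P γ)]
        rw [hφX, Finset.sum_mul_sum]
        refine Finset.sum_congr rfl fun γ _ => ?_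
        rw [hφsmul]
        refine Eq.trans ?_ (Finset.sum_eq_single_of_mem γ (Finset.mem_univ γ) ?_).symm
        · rw [Matrix.smul_mul, Matrix.mul_smul, smul_smul, hφPP1 γ]
        · intro δ _ hδ
          rw [Matrix.smul_mul, Matrix.mul_smul, hφPP0 γ δ (Ne.symm hδ), smul_zero, smul_zero]
      have hφXherm : (φ X)ᴴ = φ X := by
        rw [← hφstar, hXherm.eq]
      have hKK : ∑ m, K m * (K m)ᴴ = Q := by
        have h1 := hφK 1
        simp only [Matrix.mul_one] at h1
        rw [← h1, hφ1]
      have hDsum : ∑ m, (K m * X - φ X * K m) * (K m * X - φ X * K m)ᴴ = 0 := by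
        have expand : ∀ m, (K m * X - φ X * K m) * (K m * X - φ X * K m)ᴴ
            = K m * (X * X) * (K m)ᴴ - (K m * X * (K m)ᴴ) * φ X
              - φ X * (K m * X * (K m)ᴴ) + φ X * (K m * (K m)ᴴ) * φ X := by
          intro m
          rw [Matrix.conjTranspose_sub, Matrix.conjTranspose_mul (K m) X,
            Matrix.conjTranspose_mul (φ X) (K m), hφXherm, hXherm.eq]
          rw [Matrix.sub_mul, Matrix.mul_sub, Matrix.mul_sub]
          simp only [Matrix.mul_assoc]
          abel
        rw [Finset.sum_congr rfl (fun m _ => expand m)]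
        rw [Finset.sum_add_distrib, Finset.sum_sub_distrib, Finset.sum_sub_distrib]
        rw [← Matrix.sum_mul, ← Matrix.mul_sum, ← Matrix.sum_mul, ← Matrix.mul_sum]
        rw [← hφK (X * X), ← hφK X, hKK, hφXX]
        rw [hφQr X]
        abel
      have hD := eq_zero_of_sum_mul_conjTranspose _ hDsum
      refine ⟨fun m => sub_eq_zero.mp (hD m), ?_⟩
      -- commutation with σ
      rw [hφX, Matrix.sum_mul, Matrix.mul_sum]
      refine Finset.sum_congr rfl fun γ _ => ?_
      rw [Matrix.smul_mul, Matrix.mul_smul]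
      congr 1
      rw [hφP γ]
      calc (R * Ψ γ * R) * σ
          = R * (Ψ γ * (R * σ)) := by simp only [mul_assoc]
        _ = R * (Ψ γ * (σ * R)) := by rw [hRσ]
        _ = R * ((Ψ γ * σ) * R) := by simp only [mul_assoc]
        _ = R * ((σ * Ψ γ) * R) := by rw [hΨσcomm γ]
        _ = (R * σ) * (Ψ γ * R) := by simp only [mul_assoc]
        _ = (σ * R) * (Ψ γ * R) := by rw [hRσ]
        _ = σ * (R * Ψ γ * R) := by simp only [mul_assoc]

    have hsplit : ∀ X : Matrix (Fin dA) (Fin dA) ℂ, Xᵀ ∈ 𝒜 →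
        ∃ H G : Matrix (Fin dA) (Fin dA) ℂ, Hᵀ ∈ 𝒜 ∧ Gᵀ ∈ 𝒜 ∧ H.IsHermitian ∧ G.IsHermitian ∧
          X = H + Complex.I • G := by
      intro X hX
      have hXH : (Xᴴ)ᵀ ∈ 𝒜 := by
        have : (Xᴴ)ᵀ = star (Xᵀ) := by
          rw [Matrix.star_eq_conjTranspose]
          ext i j
          simp [Matrix.conjTranspose_apply, Matrix.transpose_apply]
        rw [this]
        exact star_mem hX
      refine ⟨(2⁻¹ : ℂ) • (X + Xᴴ), (Complex.I * 2⁻¹) • (Xᴴ - X), ?_, ?_, ?_, ?_, ?_⟩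
      · rw [Matrix.transpose_smul, Matrix.transpose_add]
        exact SMulMemClass.smul_mem _ (add_mem hX hXH)
      · rw [Matrix.transpose_smul, Matrix.transpose_sub]
        exact SMulMemClass.smul_mem _ (sub_mem hXH hX)
      · unfold Matrix.IsHermitian
        rw [Matrix.conjTranspose_smul, Matrix.conjTranspose_add,
          Matrix.conjTranspose_conjTranspose]
        rw [show star (2⁻¹ : ℂ) = (2⁻¹ : ℂ) by simp]
        rw [add_comm]
      · unfold Matrix.IsHermitian
        rw [Matrix.conjTranspose_smul, Matrix.conjTranspose_sub,
          Matrix.conjTranspose_conjTranspose]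
        rw [show star (Complex.I * 2⁻¹) = -(Complex.I * 2⁻¹) by simp [Complex.ext_iff]]
        rw [neg_smul, ← smul_neg, neg_sub]
      · have h2 : Complex.I • ((Complex.I * 2⁻¹) • (Xᴴ - X)) = -((2⁻¹ : ℂ) • (Xᴴ - X)) := by
          rw [smul_smul, ← neg_smul]
          congr 1
          rw [← mul_assoc, Complex.I_mul_I]
          ring
        rw [h2]
        ext i j
        simp only [Matrix.add_apply, Matrix.smul_apply, Matrix.sub_apply, Matrix.neg_apply,
          smul_eq_mul]
        ring
    have hKXgen : ∀ X, Xᵀ ∈ 𝒜 → ∀ m, K m * X = φ X * K m := by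
      intro X hX m
      obtain ⟨H, G, hH, hG, hHh, hGh, rfl⟩ := hsplit X hX
      rw [Matrix.mul_add, Matrix.mul_smul, (hmaster H hH hHh).1 m, (hmaster G hG hGh).1 m,
        hφadd, hφsmul, Matrix.add_mul, Matrix.smul_mul]
    have hφσgen : ∀ X, Xᵀ ∈ 𝒜 → φ X * σ = σ * φ X := by
      intro X hX
      obtain ⟨H, G, hH, hG, hHh, hGh, rfl⟩ := hsplit X hX
      rw [hφadd, hφsmul, Matrix.add_mul, Matrix.mul_add, Matrix.smul_mul, Matrix.mul_smul,
        (hmaster H hH hHh).2, (hmaster G hG hGh).2]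
    refine ⟨hφ1, ?_, ?_, ?_⟩
    · intro X Y hX hY
      rw [hφK (X * Y), hφK Y, Matrix.mul_sum]
      refine Finset.sum_congr rfl fun m _ => ?_
      calc K m * (X * Y) * (K m)ᴴ = (K m * X) * (Y * (K m)ᴴ) := by
            simp only [Matrix.mul_assoc]
        _ = (φ X * K m) * (Y * (K m)ᴴ) := by rw [hKXgen X hX m]
        _ = φ X * (K m * Y * (K m)ᴴ) := by simp only [Matrix.mul_assoc]
    · intro X _
      rw [Matrix.star_eq_conjTranspose, Matrix.star_eq_conjTranspose, hφstar]
    · exact hφσgen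
  · rintro ⟨h1, h2, h3, h4⟩
    intro ι _ _ E hmem hherm hidem horth hsum α β hne
    set ψ := fun γ => ptraceA ((E γ ⊗ₖ (1 : Matrix (Fin dB) (Fin dB) ℂ)) * ρ) with hψdef
    show ψ α * ψ β = 0
    have hmemT : ∀ γ, ((E γ)ᵀ)ᵀ ∈ 𝒜 := fun γ => by
      rw [Matrix.transpose_transpose]; exact hmem γ
    have hφE : ∀ γ, φ ((E γ)ᵀ) = R * ψ γ * R := fun γ => by
      rw [hφ ((E γ)ᵀ), Matrix.transpose_transpose]
    have hptr0 : ptraceA (0 : Matrix (Fin dA × Fin dB) (Fin dA × Fin dB) ℂ) = 0 := by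
      ext b b'
      simp [ptraceA]
    have hprod : (R * ψ α * R) * (R * ψ β * R) = 0 := by
      rw [← hφE α, ← hφE β, ← h2 _ _ (hmemT α) (hmemT β)]
      have hz : (E α)ᵀ * (E β)ᵀ = 0 := by
        rw [← Matrix.transpose_mul, horth β α (Ne.symm hne), Matrix.transpose_zero]
      rw [hz, hφ 0, Matrix.transpose_zero, Matrix.zero_kronecker, Matrix.zero_mul, hptr0,
        Matrix.mul_zero, Matrix.zero_mul]
    have hψK : ∀ γ, ψ γ = ∑ m, J m * (E γ)ᵀ * (J m)ᴴ := fun γ => hKraus (E γ)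
    have hψpsd : ∀ γ, (ψ γ).PosSemidef := fun γ => by
      rw [hψK]
      exact hpsd_mid _ ((posSemidef_of_herm_idem (hherm γ) (hidem γ)).transpose)
    have hψle : ∀ γ, (σ - ψ γ).PosSemidef := by
      intro γ
      have h1' : σ - ψ γ = ∑ m, J m * (1 - (E γ)ᵀ) * (J m)ᴴ := by
        rw [hσKraus, hψK γ, ← Finset.sum_sub_distrib]
        refine Finset.sum_congr rfl fun m _ => ?_
        rw [Matrix.mul_sub, Matrix.sub_mul, Matrix.mul_one]
      rw [h1']
      refine hpsd_mid _ ?_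
      have ht : (1 : Matrix (Fin dA) (Fin dA) ℂ) - (E γ)ᵀ
          = ((1 : Matrix (Fin dA) (Fin dA) ℂ) - E γ)ᵀ := by
        rw [Matrix.transpose_sub, Matrix.transpose_one]
      rw [ht]
      refine (posSemidef_of_herm_idem (Matrix.isHermitian_one.sub (hherm γ)) ?_).transpose
      have hexp : ((1 : Matrix (Fin dA) (Fin dA) ℂ) - E γ) * (1 - E γ)
          = 1 - E γ - E γ + E γ * E γ := by noncomm_ring
      rw [hexp, hidem γ]
      abel
    have hψsupp := fun γ => hsupp (hψpsd γ) (hψle γ)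
    -- σ commutes with each ψ γ
    have hσψ : ∀ γ, σ * ψ γ = ψ γ * σ := by
      intro γ
      have hTσ : (R * ψ γ * R) * σ = σ * (R * ψ γ * R) := by
        have := h4 ((E γ)ᵀ) (hmemT γ)
        rwa [hφE γ] at this
      set B : Matrix (Fin dB) (Fin dB) ℂ := R * (R * ψ γ * R) * R with hB
      have hBσ : B * σ = σ * B := by
        rw [hB]
        calc (R * (R * ψ γ * R) * R) * σ
            = R * ((R * ψ γ * R) * (R * σ)) := by simp only [mul_assoc]
          _ = R * ((R * ψ γ * R) * (σ * R)) := by rw [hRσ]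
          _ = R * (((R * ψ γ * R) * σ) * R) := by simp only [mul_assoc]
          _ = R * ((σ * (R * ψ γ * R)) * R) := by rw [hTσ]
          _ = (R * σ) * ((R * ψ γ * R) * R) := by simp only [mul_assoc]
          _ = (σ * R) * ((R * ψ γ * R) * R) := by rw [hRσ]
          _ = σ * (R * (R * ψ γ * R) * R) := by simp only [mul_assoc]
      have hψB : ψ γ = σ * B * σ := by
        rw [hB]
        calc ψ γ = Q * ψ γ * Q := by rw [(hψsupp γ).2, (hψsupp γ).1]
          _ = (σ * (R * R)) * ψ γ * ((R * R) * σ) := by rw [hσRR, hRinv]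
          _ = σ * (R * (R * ψ γ * R) * R) * σ := by simp only [mul_assoc]
      calc σ * ψ γ = σ * (σ * B * σ) := by rw [← hψB]
        _ = σ * ((σ * B) * σ) := by simp only [mul_assoc]
        _ = σ * ((B * σ) * σ) := by rw [hBσ]
        _ = (σ * B * σ) * σ := by simp only [mul_assoc]
        _ = ψ γ * σ := by rw [← hψB]
    have hmid : ψ α * (R * R) * ψ β = 0 := by
      have hkey : ψ α * (R * R) * ψ β
          = σ * R * ((R * ψ α * R) * (R * ψ β * R)) * R * σ := by
        calc ψ α * (R * R) * ψ β
            = (Q * ψ α) * (R * R) * (ψ β * Q) := by rw [(hψsupp α).2, (hψsupp β).1]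
          _ = ((σ * (R * R)) * ψ α) * (R * R) * (ψ β * ((R * R) * σ)) := by
              rw [hσRR, hRinv]
          _ = σ * R * ((R * ψ α * R) * (R * ψ β * R)) * R * σ := by
              simp only [mul_assoc]
      rw [hkey, hprod]
      simp
    calc ψ α * ψ β = (ψ α * Q) * ψ β := by rw [(hψsupp α).1]
      _ = (ψ α * ((R * R) * σ)) * ψ β := by rw [hRinv]
      _ = ψ α * (R * R) * (σ * ψ β) := by simp only [mul_assoc]
      _ = ψ α * (R * R) * (ψ β * σ) := by rw [hσψ β]
      _ = (ψ α * (R * R) * ψ β) * σ := by simp only [mul_assoc]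
      _ = 0 := by rw [hmid, Matrix.zero_mul]
end
end
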